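/- arXiv:1302.0428 — 4 statements merged into one kernel-verified Lean document; each statement's English description precedes it below -/
import Mathlib

section
/- Let W = S_n with its Bruhat order ≤ and length function ℓ (number of inversions). If w₁ ≤ w₂ and ℓ(w₂) = ℓ(w₁) + 2, then there exist exactly two elements v ∈ W with w₁ ≤ v ≤ w₂ and ℓ(v) = ℓ(w₁) + 1. -/
open Equiv

/-- The Coxeter length of a permutation of `Fin n`: its number of inversions. -/
def invLength {n : ℕ} (w : Perm (Fin n)) : ℕ :=
  (Finset.univ.filter (fun p : Fin n × Fin n => p.1 < p.2 ∧ w p.2 < w p.1)).card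

/-- The Bruhat order on `S_n`: `v ≤ w` iff `w` is obtained from `v` by a chain of
multiplications by transpositions, each strictly increasing the number of inversions. -/
def bruhatLE {n : ℕ} (v w : Perm (Fin n)) : Prop :=
  Relation.ReflTransGen
    (fun a b => (∃ i j : Fin n, i ≠ j ∧ b = a * Equiv.swap i j) ∧ invLength a < invLength b)
    v w

namespace BruhatAux

open Finset

variable {n : ℕ}

/-- The inversion set of a permutation. -/
def invSet (w : Perm (Fin n)) : Finset (Fin n × Fin n) :=
  Finset.univ.filter (fun p : Fin n × Fin n => p.1 < p.2 ∧ w p.2 < w p.1)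

lemma invLength_eq_card (w : Perm (Fin n)) : invLength w = (invSet w).card := rfl

lemma mem_invSet {w : Perm (Fin n)} {p : Fin n × Fin n} :
    p ∈ invSet w ↔ p.1 < p.2 ∧ w p.2 < w p.1 := by
  simp [invSet]

/-- sort the image of a pair under `t`. -/
def sortPair (t : Perm (Fin n)) (p : Fin n × Fin n) : Fin n × Fin n :=
  if t p.1 < t p.2 then (t p.1, t p.2) else (t p.2, t p.1)

lemma card_symmDiff' {α : Type*} [DecidableEq α] (s t : Finset α) :
    (symmDiff s t).card + 2 * (s ∩ t).card = s.card + t.card := by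
  have h1 : symmDiff s t = (s \ t) ∪ (t \ s) := rfl
  have hd : Disjoint (s \ t) (t \ s) := disjoint_sdiff_sdiff
  have h2 := Finset.card_union_of_disjoint hd
  have h3 := Finset.card_sdiff_add_card_inter s t
  have h4 := Finset.card_sdiff_add_card_inter t s
  rw [Finset.inter_comm t s] at h4
  rw [h1, h2]
  omega

/-- the key identity relating `ℓ(v*t)` with `ℓ(v)` and `ℓ(t)` for an involution `t`. -/
lemma invLength_mul_involutive (v t : Perm (Fin n)) (ht : ∀ x, t (t x) = x) :
    invLength (v * t) + 2 * (invSet v ∩ invSet t).card = invLength v + invLength t := by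
  have hcard : invLength (v * t) = (symmDiff (invSet v) (invSet t)).card := by
    rw [invLength_eq_card]
    apply Finset.card_bij' (fun p _ => sortPair t p) (fun q _ => sortPair t q)
    · -- forward membership
      rintro ⟨a, b⟩ hp
      rw [mem_invSet] at hp
      obtain ⟨hab, hv⟩ := hp
      simp only [Perm.mul_apply] at hv
      by_cases h : t a < t b
      · have : sortPair t (a, b) = (t a, t b) := by simp [sortPair, h]
        rw [this, Finset.mem_symmDiff]
        left
        constructor
        · rw [mem_invSet]; exact ⟨h, hv⟩
        · rw [mem_invSet]; push_neg
          intro _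
          rw [ht, ht]
          exact le_of_lt hab
      · have hne : t a ≠ t b := fun hh => absurd (t.injective hh) (ne_of_lt hab)
        have h' : t b < t a := lt_of_le_of_ne (not_lt.mp h) (Ne.symm hne)
        have : sortPair t (a, b) = (t b, t a) := by simp [sortPair, h]
        rw [this, Finset.mem_symmDiff]
        right
        constructor
        · rw [mem_invSet]; simp only
          rw [ht, ht]
          exact ⟨h', hab⟩
        · rw [mem_invSet]; push_neg
          intro _
          exact le_of_lt hv
    · -- backward membership
      rintro ⟨c, d⟩ hq
      rw [Finset.mem_symmDiff] at hq
      rcases hq with ⟨hX, hY⟩ | ⟨hY, hX⟩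
      · rw [mem_invSet] at hX hY
        obtain ⟨hcd, hv⟩ := hX
        push_neg at hY
        have htd : ¬ t d < t c := fun hh => absurd (hY hcd) (not_le.mpr hh)
        have hne : t c ≠ t d := fun hh => absurd (t.injective hh) (ne_of_lt hcd)
        have h' : t c < t d := lt_of_le_of_ne (not_lt.mp htd) hne
        have : sortPair t (c, d) = (t c, t d) := by simp [sortPair, h']
        rw [this, mem_invSet]
        simp only [Perm.mul_apply]
        rw [ht, ht]
        exact ⟨h', hv⟩
      · rw [mem_invSet] at hX hY
        obtain ⟨hcd, htc⟩ := hY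
        push_neg at hX
        have hle := hX hcd
        have hne : v c ≠ v d := fun hh => absurd (v.injective hh) (ne_of_lt hcd)
        have hvd : v c < v d := lt_of_le_of_ne hle hne
        have : sortPair t (c, d) = (t d, t c) := by
          simp [sortPair, not_lt.mpr (le_of_lt htc)]
        rw [this, mem_invSet]
        simp only [Perm.mul_apply]
        rw [ht, ht]
        exact ⟨htc, hvd⟩
    · -- left inverse
      rintro ⟨a, b⟩ hp
      rw [mem_invSet] at hp
      obtain ⟨hab, _⟩ := hp
      by_cases h : t a < t b
      · have h1 : sortPair t (a, b) = (t a, t b) := by simp [sortPair, h]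
        rw [h1]
        simp [sortPair, ht, hab]
      · have hne : t a ≠ t b := fun hh => absurd (t.injective hh) (ne_of_lt hab)
        have h' : t b < t a := lt_of_le_of_ne (not_lt.mp h) (Ne.symm hne)
        have h1 : sortPair t (a, b) = (t b, t a) := by simp [sortPair, h]
        rw [h1]
        simp [sortPair, ht, hab, not_lt.mpr (le_of_lt hab)]
    · -- right inverse
      rintro ⟨c, d⟩ hq
      have hcd : c < d := by
        rw [Finset.mem_symmDiff] at hq
        rcases hq with ⟨hX, _⟩ | ⟨hX, _⟩ <;> exact (mem_invSet.mp hX).1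
      by_cases h : t c < t d
      · have h1 : sortPair t (c, d) = (t c, t d) := by simp [sortPair, h]
        rw [h1]
        simp [sortPair, ht, hcd]
      · have hne : t c ≠ t d := fun hh => absurd (t.injective hh) (ne_of_lt hcd)
        have h' : t d < t c := lt_of_le_of_ne (not_lt.mp h) (Ne.symm hne)
        have h1 : sortPair t (c, d) = (t d, t c) := by simp [sortPair, h]
        rw [h1]
        simp [sortPair, ht, hcd, not_lt.mpr (le_of_lt hcd)]
  rw [hcard, invLength_eq_card, invLength_eq_card]
  exact card_symmDiff' _ _

end BruhatAux
section PA2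
open Finset
variable {n : ℕ}
namespace BruhatAux

lemma invSet_swap {i j : Fin n} (hij : i < j) :
    invSet (swap i j) =
      ((Ioc i j).image fun b => ((i : Fin n), b)) ∪ ((Ioo i j).image fun a => (a, j)) := by
  ext ⟨a, b⟩
  rw [mem_invSet]
  simp only [mem_union, mem_image, mem_Ioc, mem_Ioo, Prod.mk.injEq]
  constructor
  · rintro ⟨hab, hs⟩
    by_cases hai : a = i
    · rw [hai, swap_apply_left] at hs
      by_cases hbj : b = j
      · exact Or.inl ⟨b, ⟨hai ▸ hab, le_of_eq hbj⟩, hai.symm, rfl⟩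
      · have hbi : b ≠ i := ne_of_gt (hai ▸ hab)
        rw [swap_apply_of_ne_of_ne hbi hbj] at hs
        exact Or.inl ⟨b, ⟨hai ▸ hab, le_of_lt hs⟩, hai.symm, rfl⟩
    · by_cases haj : a = j
      · rw [haj, swap_apply_right] at hs
        have hab' : j < b := haj ▸ hab
        have hbi : b ≠ i := ne_of_gt (lt_trans hij hab')
        have hbj : b ≠ j := ne_of_gt hab'
        rw [swap_apply_of_ne_of_ne hbi hbj] at hs
        exact absurd (lt_trans (lt_trans hij hab') hs) (lt_irrefl i)
      · rw [swap_apply_of_ne_of_ne hai haj] at hs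
        by_cases hbi : b = i
        · rw [hbi, swap_apply_left] at hs
          have h1 : a < i := hbi ▸ hab
          exact absurd (lt_trans (lt_trans h1 hij) hs) (lt_irrefl a)
        · by_cases hbj : b = j
          · rw [hbj, swap_apply_right] at hs
            exact Or.inr ⟨a, ⟨hs, hbj ▸ hab⟩, rfl, hbj.symm⟩
          · rw [swap_apply_of_ne_of_ne hbi hbj] at hs
            exact absurd (lt_trans hab hs) (lt_irrefl a)
  · rintro (⟨x, ⟨h1, h2⟩, hia, hxb⟩ | ⟨x, ⟨h1, h2⟩, hxa, hjb⟩)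
    · rw [← hia, ← hxb]
      refine ⟨h1, ?_⟩
      rw [swap_apply_left]
      by_cases hxj : x = j
      · rw [hxj, swap_apply_right]; exact hij
      · rw [swap_apply_of_ne_of_ne (ne_of_gt h1) hxj]
        exact lt_of_le_of_ne h2 hxj
    · rw [← hxa, ← hjb]
      refine ⟨h2, ?_⟩
      rw [swap_apply_right, swap_apply_of_ne_of_ne (ne_of_gt h1) (ne_of_lt h2)]
      exact h1

lemma invLength_swap_eq {i j : Fin n} (hij : i < j) :
    invLength (swap i j) = 2 * (Ioo i j).card + 1 := by
  rw [invLength_eq_card, invSet_swap hij]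
  have hinjA : ((Ioc i j).image fun b => ((i : Fin n), b)).card = (Ioc i j).card :=
    Finset.card_image_of_injective _ (fun x y h => ((Prod.mk.injEq _ _ _ _).mp h).2)
  have hinjB : ((Ioo i j).image fun a => (a, j)).card = (Ioo i j).card :=
    Finset.card_image_of_injective _ (fun x y h => ((Prod.mk.injEq _ _ _ _).mp h).1)
  have hIoc : (Ioc i j).card = (Ioo i j).card + 1 := by
    rw [← Finset.Ioo_insert_right hij, Finset.card_insert_of_notMem (by simp)]
  have hdisj : Disjoint ((Ioc i j).image fun b => ((i : Fin n), b))
      ((Ioo i j).image fun a => (a, j)) := by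
    rw [Finset.disjoint_left]
    rintro ⟨pa, pb⟩ hp hq
    simp only [mem_image, mem_Ioc, mem_Ioo, Prod.mk.injEq] at hp hq
    obtain ⟨x, _, hxi, _⟩ := hp
    obtain ⟨y, ⟨hy1, _⟩, hya, _⟩ := hq
    rw [hya, ← hxi] at hy1
    exact absurd hy1 (lt_irrefl i)
  rw [Finset.card_union_of_disjoint hdisj, hinjA, hinjB, hIoc]
  omega

lemma inter_invSet_swap_le {v : Perm (Fin n)} {i j : Fin n} (hij : i < j) (hv : v i < v j) :
    (invSet v ∩ invSet (swap i j)).card ≤ (Ioo i j).card := by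
  classical
  set A : Finset (Fin n × Fin n) := (Ioc i j).image fun b => ((i : Fin n), b) with hA
  set B : Finset (Fin n × Fin n) := (Ioo i j).image fun a => (a, j) with hB
  have hsplit : invSet v ∩ invSet (swap i j) ⊆ (invSet v ∩ A) ∪ (invSet v ∩ B) := by
    rw [invSet_swap hij, ← Finset.inter_union_distrib_left]
  have h1 : (invSet v ∩ A).card ≤ (B \ invSet v).card := by
    apply Finset.card_le_card_of_injOn (fun p => (p.2, j))
    · rintro ⟨pa, pb⟩ hp
      rw [Finset.mem_coe, Finset.mem_inter] at hp
      obtain ⟨hpX, hpA⟩ := hp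
      rw [mem_invSet] at hpX
      simp only [hA, mem_image, mem_Ioc, Prod.mk.injEq] at hpA
      obtain ⟨x, ⟨hx1, hx2⟩, hxi, hxb⟩ := hpA
      -- pa = i, pb = x ∈ Ioc i j, and v pb < v pa = v i
      rw [Finset.mem_coe, Finset.mem_sdiff]
      constructor
      · have hib : i < pb := by rw [← hxb]; exact hx1
        have hne : pb ≠ j := by
          intro hh
          have h2 := hpX.2
          rw [hh, ← hxi] at h2
          exact absurd (lt_trans h2 hv) (lt_irrefl (v j))
        have hbj : pb < j := lt_of_le_of_ne (hxb ▸ hx2) hne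
        rw [hB, Finset.mem_image]
        exact ⟨pb, Finset.mem_Ioo.mpr ⟨hib, hbj⟩, rfl⟩
      · rw [mem_invSet]
        push_neg
        intro hlt
        -- goal : v j ≤ v pb is false... goal: v j ≤ v (pb,j).1? condition ¬(v j < v pb)
        have h2 := hpX.2
        rw [← hxi] at h2
        exact le_of_lt (lt_trans h2 hv)
    · rintro ⟨pa, pb⟩ hp ⟨qa, qb⟩ hq heq
      simp only [Finset.coe_inter, Set.mem_inter_iff, Finset.mem_coe] at hp hq
      have hpA := hp.2
      have hqA := hq.2
      simp only [hA, mem_image, mem_Ioc, Prod.mk.injEq] at hpA hqA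
      obtain ⟨x, _, hxi, _⟩ := hpA
      obtain ⟨y, _, hyi, _⟩ := hqA
      simp only [Prod.mk.injEq] at heq
      rw [Prod.mk.injEq]
      exact ⟨hxi ▸ hyi ▸ rfl, heq.1⟩
  have h2 : (invSet v ∩ B).card = (B ∩ invSet v).card := by rw [Finset.inter_comm]
  have h3 := Finset.card_sdiff_add_card_inter B (invSet v)
  have h4 := Finset.card_union_le (invSet v ∩ A) (invSet v ∩ B)
  have h5 := Finset.card_le_card hsplit
  have hBcard : B.card = (Ioo i j).card :=
    Finset.card_image_of_injective _ (fun x y h => ((Prod.mk.injEq _ _ _ _).mp h).1)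
  omega

lemma invLength_lt_mul_swap {v : Perm (Fin n)} {i j : Fin n} (hij : i < j) (hv : v i < v j) :
    invLength v < invLength (v * swap i j) := by
  have hid := invLength_mul_involutive v (swap i j) (swap_apply_self i j)
  have h1 := inter_invSet_swap_le hij hv
  have h2 := invLength_swap_eq hij
  omega

lemma lt_apply_of_invLength_lt {v : Perm (Fin n)} {i j : Fin n} (hij : i < j)
    (h : invLength v < invLength (v * swap i j)) : v i < v j := by
  by_contra hc
  have hne : v i ≠ v j := fun hh => (ne_of_lt hij) (v.injective hh)
  have hvj : v j < v i := lt_of_le_of_ne (not_lt.mp hc) (fun hh => hne hh.symm)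
  set v' := v * swap i j with hv'
  have e1 : v' i = v j := by rw [hv', Perm.mul_apply, swap_apply_left]
  have e2 : v' j = v i := by rw [hv', Perm.mul_apply, swap_apply_right]
  have h1 : v' i < v' j := by rw [e1, e2]; exact hvj
  have h2 := invLength_lt_mul_swap hij h1
  have h3 : v' * swap i j = v := by rw [hv', mul_assoc, swap_mul_self, mul_one]
  rw [h3] at h2
  omega

lemma odd_invLength_add {v : Perm (Fin n)} {i j : Fin n} (hij : i < j) :
    Odd (invLength (v * swap i j) + invLength v) := by
  have hid := invLength_mul_involutive v (swap i j) (swap_apply_self i j)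
  have h2 := invLength_swap_eq hij
  refine ⟨invLength v + (Ioo i j).card - (invSet v ∩ invSet (swap i j)).card, by omega⟩

lemma odd_invLength_add' {v : Perm (Fin n)} {i j : Fin n} (hij : i ≠ j) :
    Odd (invLength (v * swap i j) + invLength v) := by
  rcases hij.lt_or_gt with h | h
  · exact odd_invLength_add h
  · rw [swap_comm]
    exact odd_invLength_add h

end BruhatAux
end PA2
section PA3
open Finset
variable {n : ℕ}
namespace BruhatAux

lemma invLength_one : invLength (1 : Perm (Fin n)) = 0 := by
  rw [invLength]
  rw [Finset.card_eq_zero, Finset.eq_empty_iff_forall_notMem]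
  rintro ⟨a, b⟩ hp
  rw [Finset.mem_filter] at hp
  obtain ⟨-, h1, h2⟩ := hp
  simp only [Perm.one_apply] at h2
  exact absurd (lt_trans h1 h2) (lt_irrefl a)

/-- In `Fin n`, the successor of `k` when `k+1 < n`. -/
def fsucc (k : Fin n) (hk : (k : ℕ) + 1 < n) : Fin n := ⟨(k : ℕ) + 1, hk⟩

lemma lt_fsucc (k : Fin n) (hk : (k : ℕ) + 1 < n) : k < fsucc k hk := by
  rw [Fin.lt_def]; simp [fsucc]

lemma invSet_swap_adj {k : Fin n} (hk : (k : ℕ) + 1 < n) :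
    invSet (swap k (fsucc k hk)) = {(k, fsucc k hk)} := by
  rw [invSet_swap (lt_fsucc k hk)]
  have h1 : Ioc k (fsucc k hk) = {fsucc k hk} := by
    ext x
    simp only [mem_Ioc, Finset.mem_singleton, Fin.lt_def, Fin.le_def, Fin.ext_iff, fsucc]
    omega
  have h2 : Ioo k (fsucc k hk) = (∅ : Finset (Fin n)) := by
    ext x
    simp only [mem_Ioo, Finset.notMem_empty, iff_false, not_and, Fin.lt_def, fsucc]
    omega
  rw [h1, h2]
  simp

lemma invLength_adj_asc {v : Perm (Fin n)} {k : Fin n} (hk : (k : ℕ) + 1 < n)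
    (h : v k < v (fsucc k hk)) :
    invLength (v * swap k (fsucc k hk)) = invLength v + 1 := by
  have hid := invLength_mul_involutive v (swap k (fsucc k hk)) (swap_apply_self _ _)
  have hY : invLength (swap k (fsucc k hk)) = 1 := by
    rw [invLength_eq_card, invSet_swap_adj hk, Finset.card_singleton]
  have hX : (invSet v ∩ invSet (swap k (fsucc k hk))).card = 0 := by
    rw [Finset.card_eq_zero, Finset.eq_empty_iff_forall_notMem]
    intro p hp
    rw [invSet_swap_adj hk, Finset.mem_inter, Finset.mem_singleton] at hp
    obtain ⟨hpX, rfl⟩ := hp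
    rw [mem_invSet] at hpX
    exact absurd hpX.2 (not_lt.mpr (le_of_lt h))
  omega

lemma invLength_adj_desc {v : Perm (Fin n)} {k : Fin n} (hk : (k : ℕ) + 1 < n)
    (h : v (fsucc k hk) < v k) :
    invLength (v * swap k (fsucc k hk)) + 1 = invLength v := by
  have hid := invLength_mul_involutive v (swap k (fsucc k hk)) (swap_apply_self _ _)
  have hY : invLength (swap k (fsucc k hk)) = 1 := by
    rw [invLength_eq_card, invSet_swap_adj hk, Finset.card_singleton]
  have hX : (invSet v ∩ invSet (swap k (fsucc k hk))).card = 1 := by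
    rw [invSet_swap_adj hk]
    have : invSet v ∩ {(k, fsucc k hk)} = {(k, fsucc k hk)} := by
      rw [Finset.inter_eq_right]
      intro p hp
      rw [Finset.mem_singleton] at hp
      subst hp
      rw [mem_invSet]
      exact ⟨lt_fsucc k hk, h⟩
    rw [this, Finset.card_singleton]
  omega

lemma apply_ne_adj {v : Perm (Fin n)} {k : Fin n} (hk : (k : ℕ) + 1 < n) :
    v k ≠ v (fsucc k hk) :=
  fun h => absurd (v.injective h) (ne_of_lt (lt_fsucc k hk))

end BruhatAux
end PA3
section PB1
open Finset
variable {n : ℕ}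
namespace BruhatAux

/-- rank function: number of `a` with `a < c` (as naturals) and `v a < m`. -/
def rk (v : Perm (Fin n)) (c m : ℕ) : ℕ :=
  ∑ a : Fin n, if (a : ℕ) < c ∧ ((v a : ℕ)) < m then 1 else 0

/-- entrywise dominance of rank matrices; `rle u w` means `u ≤ w` in Bruhat order. -/
def rle (u w : Perm (Fin n)) : Prop := ∀ c m : ℕ, rk w c m ≤ rk u c m

lemma rle_refl (u : Perm (Fin n)) : rle u u := fun _ _ => le_refl _

lemma rk_mul (v t : Perm (Fin n)) (ht : ∀ x, t (t x) = x) (c m : ℕ) :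
    rk (v * t) c m = ∑ b : Fin n, if ((t b : Fin n) : ℕ) < c ∧ ((v b : ℕ)) < m then 1 else 0 := by
  rw [rk]
  rw [← Equiv.sum_comp t (fun b => if ((t b : Fin n) : ℕ) < c ∧ ((v b : ℕ)) < m then 1 else 0)]
  apply Finset.sum_congr rfl
  intro a _
  rw [ht]
  simp [Perm.mul_apply]
  exact if_congr Iff.rfl rfl rfl

lemma sum_two_point (f g : Fin n → ℕ) (i j : Fin n) (hij : i ≠ j)
    (h : ∀ b, b ≠ i → b ≠ j → f b = g b) :
    (∑ b, f b) + g i + g j = (∑ b, g b) + f i + f j := by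
  classical
  have key : ∀ F : Fin n → ℕ, ∑ b, F b = F i + (F j + ∑ b ∈ (univ.erase i).erase j, F b) := by
    intro F
    rw [Finset.add_sum_erase _ F (Finset.mem_erase.mpr ⟨Ne.symm hij, Finset.mem_univ j⟩)]
    rw [Finset.add_sum_erase _ F (Finset.mem_univ i)]
  rw [key f, key g]
  have : ∑ b ∈ (univ.erase i).erase j, f b = ∑ b ∈ (univ.erase i).erase j, g b := by
    apply Finset.sum_congr rfl
    intro b hb
    rw [Finset.mem_erase, Finset.mem_erase] at hb
    exact h b hb.2.1 hb.1
  omega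

lemma rk_R1 {v : Perm (Fin n)} {i j : Fin n} {c : ℕ} (hc : ((i : ℕ) < c ↔ (j : ℕ) < c))
    (m : ℕ) : rk (v * swap i j) c m = rk v c m := by
  rw [rk_mul v (swap i j) (swap_apply_self i j), rk]
  apply Finset.sum_congr rfl
  intro b _
  by_cases hbi : b = i
  · subst hbi
    rw [swap_apply_left]
    by_cases h2 : ((v b : ℕ)) < m
    · simp only [h2, and_true]
      exact if_congr hc.symm rfl rfl
    · simp [h2]
  · by_cases hbj : b = j
    · subst hbj
      rw [swap_apply_right]
      by_cases h2 : ((v b : ℕ)) < m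
      · simp only [h2, and_true]
        exact if_congr hc rfl rfl
      · simp [h2]
    · rw [swap_apply_of_ne_of_ne hbi hbj]

lemma rk_R2 {v : Perm (Fin n)} {i j : Fin n} {c : ℕ} (hi : (i : ℕ) < c) (hj : ¬ (j : ℕ) < c)
    (m : ℕ) :
    rk (v * swap i j) c m + (if ((v i : ℕ)) < m then 1 else 0)
      = rk v c m + (if ((v j : ℕ)) < m then 1 else 0) := by
  have hij : i ≠ j := by
    intro h; subst h; exact hj hi
  rw [rk_mul v (swap i j) (swap_apply_self i j), rk]
  have := sum_two_point
    (fun b => if ((swap i j b : Fin n) : ℕ) < c ∧ ((v b : ℕ)) < m then 1 else 0)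
    (fun b => if (b : ℕ) < c ∧ ((v b : ℕ)) < m then 1 else 0) i j hij
    (fun b hbi hbj => by simp only [swap_apply_of_ne_of_ne hbi hbj])
  simp only [swap_apply_left, swap_apply_right] at this
  simp only [hi, hj, true_and, false_and, if_false] at this
  omega

/-- decomposition of `rk` at an index `d` with `d < c`. -/
lemma rk_split {v : Perm (Fin n)} {d : Fin n} {c m : ℕ} (hd : (d : ℕ) < c) :
    rk v c m = (∑ a : Fin n, if (a : ℕ) < (d : ℕ) ∧ ((v a : ℕ)) < m then 1 else 0)
      + (if ((v d : ℕ)) < m then 1 else 0)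
      + (∑ a : Fin n, if (d : ℕ) < (a : ℕ) ∧ (a : ℕ) < c ∧ ((v a : ℕ)) < m then 1 else 0) := by
  have hmid : (if ((v d : ℕ)) < m then 1 else 0)
      = ∑ a : Fin n, if (a : ℕ) = (d : ℕ) ∧ ((v a : ℕ)) < m then 1 else 0 := by
    rw [Finset.sum_eq_single_of_mem d (Finset.mem_univ d)]
    · simp
    · intro b _ hbd
      have : ¬ ((b : ℕ) = (d : ℕ)) := fun h => hbd (Fin.ext h)
      simp [this]
  rw [hmid, rk, ← Finset.sum_add_distrib, ← Finset.sum_add_distrib]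
  apply Finset.sum_congr rfl
  intro a _
  by_cases hP : ((v a : ℕ)) < m <;> split_ifs <;> omega

lemma rk_succ (v : Perm (Fin n)) (d : Fin n) (m : ℕ) :
    rk v ((d : ℕ) + 1) m = rk v (d : ℕ) m + (if ((v d : ℕ)) < m then 1 else 0) := by
  have hmid : (if ((v d : ℕ)) < m then 1 else 0)
      = ∑ a : Fin n, if (a : ℕ) = (d : ℕ) ∧ ((v a : ℕ)) < m then 1 else 0 := by
    rw [Finset.sum_eq_single_of_mem d (Finset.mem_univ d)]
    · simp
    · intro b _ hbd
      have : ¬ ((b : ℕ) = (d : ℕ)) := fun h => hbd (Fin.ext h)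
      simp [this]
  rw [hmid, rk, rk, ← Finset.sum_add_distrib]
  apply Finset.sum_congr rfl
  intro a _
  by_cases hP : ((v a : ℕ)) < m <;> split_ifs <;> omega

end BruhatAux
end PB1
section PB2
open Finset
variable {n : ℕ}
namespace BruhatAux

lemma bruhat_refl (u : Perm (Fin n)) : bruhatLE u u := Relation.ReflTransGen.refl

lemma bruhat_trans {u v w : Perm (Fin n)} (h1 : bruhatLE u v) (h2 : bruhatLE v w) :
    bruhatLE u w := Relation.ReflTransGen.trans h1 h2

lemma bruhat_step {u : Perm (Fin n)} {i j : Fin n} (hij : i ≠ j)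
    (h : invLength u < invLength (u * swap i j)) : bruhatLE u (u * swap i j) :=
  Relation.ReflTransGen.single ⟨⟨i, j, hij, rfl⟩, h⟩

lemma bruhat_length_le {u w : Perm (Fin n)} (h : bruhatLE u w) :
    invLength u ≤ invLength w := by
  induction h with
  | refl => exact le_refl _
  | tail _ hstep ih => exact le_trans ih (le_of_lt hstep.2)

lemma bruhat_eq_of_length_eq {u w : Perm (Fin n)} (h : bruhatLE u w)
    (hl : invLength u = invLength w) : u = w := by
  induction h with
  | refl => rfl
  | @tail b c hub hstep ih =>
      have h1 := bruhat_length_le hub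
      have h2 := hstep.2
      omega

/-- one swap-step decreases rank matrices pointwise. -/
lemma rk_le_of_step {a : Perm (Fin n)} {i j : Fin n} (hij : i < j)
    (hlt : invLength a < invLength (a * swap i j)) (c m : ℕ) :
    rk (a * swap i j) c m ≤ rk a c m := by
  have hv : a i < a j := lt_apply_of_invLength_lt hij hlt
  by_cases hc : ((i : ℕ) < c ↔ (j : ℕ) < c)
  · rw [rk_R1 hc]
  · have hij' : (i : ℕ) < (j : ℕ) := hij
    have key : (i : ℕ) < c ∧ ¬ (j : ℕ) < c := by
      by_cases h1 : (i : ℕ) < c <;> by_cases h2 : (j : ℕ) < c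
      · exact absurd (iff_of_true h1 h2) hc
      · exact ⟨h1, h2⟩
      · omega
      · exact absurd (iff_of_false h1 h2) hc
    obtain ⟨hi, hj⟩ := key
    have := rk_R2 (v := a) hi hj m
    have hmono : (if ((a j : ℕ)) < m then 1 else 0) ≤ (if ((a i : ℕ)) < m then 1 else 0) := by
      have : (a i : ℕ) < (a j : ℕ) := hv
      split_ifs <;> omega
    omega

lemma rle_of_bruhat {u w : Perm (Fin n)} (h : bruhatLE u w) : rle u w := by
  induction h with
  | refl => exact rle_refl u
  | @tail b c hub hstep ih =>
      obtain ⟨⟨i, j, hij, rfl⟩, hlt⟩ := hstep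
      intro cc mm
      rcases hij.lt_or_gt with hij' | hij'
      · exact le_trans (rk_le_of_step hij' hlt cc mm) (ih cc mm)
      · rw [swap_comm] at hlt ⊢
        exact le_trans (rk_le_of_step hij' hlt cc mm) (ih cc mm)

end BruhatAux
end PB2
section PB3
open Finset
variable {n : ℕ}
namespace BruhatAux

/-- measure for induction -/
def msr (u w : Perm (Fin n)) : ℕ :=
  ∑ p ∈ (range (n+1)) ×ˢ (range (n+1)), (rk u p.1 p.2 - rk w p.1 p.2)

lemma rle_step {u w : Perm (Fin n)} (h : rle u w) (hne : u ≠ w) :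
    ∃ i j : Fin n, i < j ∧ invLength u < invLength (u * swap i j) ∧
      rle (u * swap i j) w ∧ msr (u * swap i j) w < msr u w := by
  classical
  -- the first position where u and w differ
  have hD : (univ.filter (fun a : Fin n => u a ≠ w a)).Nonempty := by
    rw [Finset.filter_nonempty_iff]
    by_contra hcon
    push_neg at hcon
    exact hne (Equiv.ext (fun a => hcon a (mem_univ a)))
  set i := (univ.filter (fun a : Fin n => u a ≠ w a)).min' hD with hi_def
  have hiuw : u i ≠ w i := by
    have := Finset.min'_mem _ hD
    rw [Finset.mem_filter] at this
    exact this.2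
  have hprefix : ∀ a : Fin n, a < i → u a = w a := by
    intro a ha
    by_contra hcon
    have : i ≤ a := Finset.min'_le _ a (Finset.mem_filter.mpr ⟨mem_univ a, hcon⟩)
    exact absurd (lt_of_lt_of_le ha this) (lt_irrefl a)
  have hprefix' : ∀ a : Fin n, (a : ℕ) < (i : ℕ) → u a = w a :=
    fun a ha => hprefix a (Fin.lt_def.mpr ha)
  -- rk u and rk w agree up to column i
  have hcol : ∀ m : ℕ, rk u (i : ℕ) m = rk w (i : ℕ) m := by
    intro m
    apply Finset.sum_congr rfl
    intro a _
    by_cases ha : (a : ℕ) < (i : ℕ)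
    · rw [hprefix' a ha]
    · simp [ha]
  -- u i < w i
  have huiwi : u i < w i := by
    have h1 := rk_succ u i ((w i : ℕ) + 1)
    have h2 := rk_succ w i ((w i : ℕ) + 1)
    have h3 := h ((i : ℕ) + 1) ((w i : ℕ) + 1)
    have h4 := hcol ((w i : ℕ) + 1)
    have h5 : (if ((w i : ℕ)) < (w i : ℕ) + 1 then 1 else 0) = 1 := by simp
    have h6 : (u i : ℕ) < (w i : ℕ) + 1 := by
      by_contra hcon
      rw [if_neg hcon] at h1
      omega
    have h7 : (u i : ℕ) ≠ (w i : ℕ) := fun hh => hiuw (Fin.ext hh)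
    exact Fin.lt_def.mpr (by omega)
  -- the position j
  have hJ : (univ.filter (fun b : Fin n => i < b ∧ u i < u b ∧ u b ≤ w i)).Nonempty := by
    refine ⟨u.symm (w i), ?_⟩
    rw [Finset.mem_filter]
    have hub : u (u.symm (w i)) = w i := u.apply_symm_apply (w i)
    have hbne : u.symm (w i) ≠ i := by
      intro hh
      rw [hh] at hub
      exact hiuw hub
    have hnlt : ¬ u.symm (w i) < i := by
      intro hh
      have := hprefix _ hh
      rw [this] at hub
      exact hbne (w.injective hub)
    refine ⟨mem_univ _, lt_of_le_of_ne (not_lt.mp hnlt) (Ne.symm hbne), ?_, le_of_eq hub⟩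
    rw [hub]; exact huiwi
  set j := (univ.filter (fun b : Fin n => i < b ∧ u i < u b ∧ u b ≤ w i)).min' hJ with hj_def
  have hjmem := Finset.min'_mem _ hJ
  rw [Finset.mem_filter] at hjmem
  obtain ⟨-, hij, huij, hujwi⟩ := hjmem
  have hjmin : ∀ b : Fin n, i < b → b < j → ¬(u i < u b ∧ u b ≤ w i) := by
    intro b hb1 hb2 hcon
    have : j ≤ b := Finset.min'_le _ b (Finset.mem_filter.mpr ⟨mem_univ b, hb1, hcon⟩)
    exact absurd (lt_of_lt_of_le hb2 this) (lt_irrefl b)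
  have hlen : invLength u < invLength (u * swap i j) := invLength_lt_mul_swap hij huij
  have hpt : ∀ c m : ℕ, rk (u * swap i j) c m ≤ rk u c m := rk_le_of_step hij hlen
  -- the key strict inequality in the critical region
  have hkey : ∀ c m : ℕ, (i : ℕ) < c → ¬ (j : ℕ) < c → (u i : ℕ) < m → ¬ (u j : ℕ) < m →
      rk w c m < rk u c m := by
    intro c m hic hjc hm1 hm2
    have hujwi' : (u j : ℕ) ≤ (w i : ℕ) := Fin.le_def.mp hujwi
    have huiwi' : (u i : ℕ) < (w i : ℕ) := Fin.lt_def.mp huiwi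
    set M : ℕ := (w i : ℕ) + 1 with hM
    -- dichotomy for middle entries
    have hdich : ∀ a : Fin n, (i : ℕ) < (a : ℕ) → (a : ℕ) < c →
        ((u a : ℕ) < (u i : ℕ) ∨ (w i : ℕ) < (u a : ℕ)) := by
      intro a ha1 ha2
      have haj : a < j := Fin.lt_def.mpr (by omega)
      have hia : i < a := Fin.lt_def.mpr ha1
      have hnot := hjmin a hia haj
      have hne' : u a ≠ u i := fun hh => absurd (u.injective hh) (ne_of_gt hia)
      by_cases h1 : u a < u i
      · exact Or.inl (Fin.lt_def.mp h1)
      · have h2 : u i < u a := lt_of_le_of_ne (not_lt.mp h1) (Ne.symm hne')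
        have h3 : ¬ u a ≤ w i := fun hh => hnot ⟨h2, hh⟩
        exact Or.inr (Fin.lt_def.mp (not_le.mp h3))
    -- decompositions
    have du_m := rk_split (v := u) (d := i) (c := c) (m := m) hic
    have dw_m := rk_split (v := w) (d := i) (c := c) (m := m) hic
    have du_M := rk_split (v := u) (d := i) (c := c) (m := M) hic
    have dw_M := rk_split (v := w) (d := i) (c := c) (m := M) hic
    have hui_m : (if ((u i : ℕ)) < m then 1 else 0) = 1 := if_pos hm1
    have hwi_m : (if ((w i : ℕ)) < m then 1 else 0) = 0 := by
      rw [if_neg]; omega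
    have hui_M : (if ((u i : ℕ)) < M then 1 else 0) = 1 := by rw [if_pos]; omega
    have hwi_M : (if ((w i : ℕ)) < M then 1 else 0) = 1 := by rw [if_pos]; omega
    -- prefix sums agree
    have hP_m : (∑ a : Fin n, if (a : ℕ) < (i : ℕ) ∧ ((w a : ℕ)) < m then 1 else 0)
        = (∑ a : Fin n, if (a : ℕ) < (i : ℕ) ∧ ((u a : ℕ)) < m then 1 else 0) := by
      apply Finset.sum_congr rfl
      intro a _
      by_cases ha : (a : ℕ) < (i : ℕ)
      · rw [hprefix' a ha]
      · simp [ha]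
    have hP_M : (∑ a : Fin n, if (a : ℕ) < (i : ℕ) ∧ ((w a : ℕ)) < M then 1 else 0)
        = (∑ a : Fin n, if (a : ℕ) < (i : ℕ) ∧ ((u a : ℕ)) < M then 1 else 0) := by
      apply Finset.sum_congr rfl
      intro a _
      by_cases ha : (a : ℕ) < (i : ℕ)
      · rw [hprefix' a ha]
      · simp [ha]
    -- middle sums for u agree between thresholds m and M
    have hMu : (∑ a : Fin n, if (i : ℕ) < (a : ℕ) ∧ (a : ℕ) < c ∧ ((u a : ℕ)) < m then 1 else 0)
        = (∑ a : Fin n, if (i : ℕ) < (a : ℕ) ∧ (a : ℕ) < c ∧ ((u a : ℕ)) < M then 1 else 0) := by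
      apply Finset.sum_congr rfl
      intro a _
      by_cases ha : (i : ℕ) < (a : ℕ) ∧ (a : ℕ) < c
      · have := hdich a ha.1 ha.2
        split_ifs <;> omega
      · rw [not_and_or] at ha
        rcases ha with ha | ha <;> simp [ha]
    -- middle sums for w are monotone in the threshold
    have hMw : (∑ a : Fin n, if (i : ℕ) < (a : ℕ) ∧ (a : ℕ) < c ∧ ((w a : ℕ)) < m then 1 else 0)
        ≤ (∑ a : Fin n, if (i : ℕ) < (a : ℕ) ∧ (a : ℕ) < c ∧ ((w a : ℕ)) < M then 1 else 0) := by
      apply Finset.sum_le_sum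
      intro a _
      split_ifs <;> omega
    have hrle_M := h c M
    omega
  refine ⟨i, j, hij, hlen, ?_, ?_⟩
  · -- rle (u * swap i j) w
    intro c m
    by_cases hc : ((i : ℕ) < c ↔ (j : ℕ) < c)
    · rw [rk_R1 hc]; exact h c m
    · have hiv : (i : ℕ) < (j : ℕ) := hij
      have hcc : (i : ℕ) < c ∧ ¬ (j : ℕ) < c := by
        by_cases h1 : (i : ℕ) < c <;> by_cases h2 : (j : ℕ) < c
        · exact absurd (iff_of_true h1 h2) hc
        · exact ⟨h1, h2⟩
        · omega
        · exact absurd (iff_of_false h1 h2) hc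
      obtain ⟨hic, hjc⟩ := hcc
      have hR2 := rk_R2 (v := u) hic hjc m
      by_cases hm1 : (u i : ℕ) < m
      · by_cases hm2 : (u j : ℕ) < m
        · rw [if_pos hm1, if_pos hm2] at hR2
          have := h c m
          omega
        · rw [if_pos hm1, if_neg hm2] at hR2
          have := hkey c m hic hjc hm1 hm2
          omega
      · have hm2 : ¬ (u j : ℕ) < m := by
          have : (u i : ℕ) < (u j : ℕ) := huij
          omega
        rw [if_neg hm1, if_neg hm2] at hR2
        have := h c m
        omega
  · -- msr decreases
    have hstrict : rk (u * swap i j) ((i : ℕ) + 1) ((u i : ℕ) + 1)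
        < rk u ((i : ℕ) + 1) ((u i : ℕ) + 1) := by
      have hic : (i : ℕ) < (i : ℕ) + 1 := by omega
      have hjc : ¬ (j : ℕ) < (i : ℕ) + 1 := by
        have : (i : ℕ) < (j : ℕ) := hij
        omega
      have hR2 := rk_R2 (v := u) hic hjc ((u i : ℕ) + 1)
      have hm1 : (u i : ℕ) < (u i : ℕ) + 1 := by omega
      have hm2 : ¬ (u j : ℕ) < (u i : ℕ) + 1 := by
        have : (u i : ℕ) < (u j : ℕ) := huij
        omega
      rw [if_pos hm1, if_neg hm2] at hR2
      omega
    apply Finset.sum_lt_sum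
    · rintro ⟨c, m⟩ -
      have := hpt c m
      simp only
      omega
    · refine ⟨((i : ℕ) + 1, (u i : ℕ) + 1), ?_, ?_⟩
      · rw [Finset.mem_product, Finset.mem_range, Finset.mem_range]
        exact ⟨by omega, by have := (u i).isLt; omega⟩
      · simp only
        have h1 := hkey ((i : ℕ) + 1) ((u i : ℕ) + 1) (by omega)
          (by have : (i : ℕ) < (j : ℕ) := hij; omega) (by omega)
          (by have : (u i : ℕ) < (u j : ℕ) := huij; omega)
        omega

lemma bruhat_of_rle : ∀ {u w : Perm (Fin n)}, rle u w → bruhatLE u w := by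
  have H : ∀ (N : ℕ) (u w : Perm (Fin n)), msr u w ≤ N → rle u w → bruhatLE u w := by
    intro N
    induction N with
    | zero =>
      intro u w hm h
      by_cases huw : u = w
      · subst huw; exact bruhat_refl u
      · obtain ⟨i, j, hij, hlen, hrle, hmsr⟩ := rle_step h huw
        omega
    | succ N ih =>
      intro u w hm h
      by_cases huw : u = w
      · subst huw; exact bruhat_refl u
      · obtain ⟨i, j, hij, hlen, hrle, hmsr⟩ := rle_step h huw
        exact bruhat_trans (bruhat_step (ne_of_lt hij) hlen)
          (ih _ _ (by omega) hrle)
  intro u w h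
  exact H (msr u w) u w (le_refl _) h

lemma bruhat_iff_rle {u w : Perm (Fin n)} : bruhatLE u w ↔ rle u w :=
  ⟨rle_of_bruhat, bruhat_of_rle⟩

end BruhatAux
end PB3
section PC
open Finset
variable {n : ℕ}
namespace BruhatAux

lemma coe_fsucc (k : Fin n) (hk : (k : ℕ) + 1 < n) : ((fsucc k hk : Fin n) : ℕ) = (k : ℕ) + 1 := rfl

lemma rle_lift1 {u w : Perm (Fin n)} {k : Fin n} (hk : (k : ℕ) + 1 < n)
    (hu : u k < u (fsucc k hk)) (hw : w (fsucc k hk) < w k) (h : rle u w) :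
    rle (u * swap k (fsucc k hk)) w := by
  intro c m
  set k' : Fin n := fsucc k hk with hk'def
  have hkv : (k' : ℕ) = (k : ℕ) + 1 := rfl
  by_cases hc : ((k : ℕ) < c ↔ (k' : ℕ) < c)
  · rw [rk_R1 hc]; exact h c m
  · have hceq : c = (k : ℕ) + 1 := by
      by_cases h1 : (k : ℕ) < c <;> by_cases h2 : (k' : ℕ) < c
      · exact absurd (iff_of_true h1 h2) hc
      · omega
      · omega
      · exact absurd (iff_of_false h1 h2) hc
    subst hceq
    have hic : (k : ℕ) < (k : ℕ) + 1 := by omega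
    have hjc : ¬ (k' : ℕ) < (k : ℕ) + 1 := by omega
    have hR2 := rk_R2 (v := u) hic hjc m
    by_cases hm1 : (u k : ℕ) < m
    · by_cases hm2 : (u k' : ℕ) < m
      · rw [if_pos hm1, if_pos hm2] at hR2
        have := h ((k : ℕ) + 1) m
        omega
      · rw [if_pos hm1, if_neg hm2] at hR2
        have hlt : rk w ((k : ℕ) + 1) m < rk u ((k : ℕ) + 1) m := by
          by_contra hcon
          have heq : rk w ((k : ℕ) + 1) m = rk u ((k : ℕ) + 1) m := by
            have := h ((k : ℕ) + 1) m; omega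
          have hru' := rk_succ u k' m
          have hrw' := rk_succ w k' m
          rw [hkv] at hru' hrw'
          rw [if_neg hm2] at hru'
          have hup := h ((k : ℕ) + 1 + 1) m
          have hwk' : ¬ ((w k' : ℕ)) < m := by
            by_contra hcon2
            rw [if_pos hcon2] at hrw'
            omega
          have hwk : ¬ ((w k : ℕ)) < m := by
            have h1 : (w k' : ℕ) < (w k : ℕ) := hw
            omega
          have hru := rk_succ u k m
          have hrw := rk_succ w k m
          rw [if_pos hm1] at hru
          rw [if_neg hwk] at hrw
          have := h (k : ℕ) m
          omega
        omega
    · have hm2 : ¬ (u k' : ℕ) < m := by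
        have : (u k : ℕ) < (u k' : ℕ) := hu
        omega
      rw [if_neg hm1, if_neg hm2] at hR2
      have := h ((k : ℕ) + 1) m
      omega

lemma rle_lift2 {u w : Perm (Fin n)} {k : Fin n} (hk : (k : ℕ) + 1 < n)
    (hu : u k < u (fsucc k hk)) (hw : w (fsucc k hk) < w k) (h : rle u w) :
    rle u (w * swap k (fsucc k hk)) := by
  intro c m
  set k' : Fin n := fsucc k hk with hk'def
  have hkv : (k' : ℕ) = (k : ℕ) + 1 := rfl
  by_cases hc : ((k : ℕ) < c ↔ (k' : ℕ) < c)
  · rw [rk_R1 hc]; exact h c m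
  · have hceq : c = (k : ℕ) + 1 := by
      by_cases h1 : (k : ℕ) < c <;> by_cases h2 : (k' : ℕ) < c
      · exact absurd (iff_of_true h1 h2) hc
      · omega
      · omega
      · exact absurd (iff_of_false h1 h2) hc
    subst hceq
    have hic : (k : ℕ) < (k : ℕ) + 1 := by omega
    have hjc : ¬ (k' : ℕ) < (k : ℕ) + 1 := by omega
    have hR2 := rk_R2 (v := w) hic hjc m
    by_cases hm1 : (w k : ℕ) < m
    · have hm2 : (w k' : ℕ) < m := by
        have : (w k' : ℕ) < (w k : ℕ) := hw
        omega
      rw [if_pos hm1, if_pos hm2] at hR2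
      have := h ((k : ℕ) + 1) m
      omega
    · by_cases hm2 : (w k' : ℕ) < m
      · rw [if_neg hm1, if_pos hm2] at hR2
        have hlt : rk w ((k : ℕ) + 1) m < rk u ((k : ℕ) + 1) m := by
          by_contra hcon
          have heq : rk w ((k : ℕ) + 1) m = rk u ((k : ℕ) + 1) m := by
            have := h ((k : ℕ) + 1) m; omega
          have hru' := rk_succ u k' m
          have hrw' := rk_succ w k' m
          rw [hkv] at hru' hrw'
          rw [if_pos hm2] at hrw'
          have hup := h ((k : ℕ) + 1 + 1) m
          have huk' : ((u k' : ℕ)) < m := by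
            by_contra hcon2
            rw [if_neg hcon2] at hru'
            omega
          have huk : ((u k : ℕ)) < m := by
            have h1 : (u k : ℕ) < (u k' : ℕ) := hu
            omega
          have hru := rk_succ u k m
          have hrw := rk_succ w k m
          rw [if_pos huk] at hru
          rw [if_neg hm1] at hrw
          have := h (k : ℕ) m
          omega
        omega
      · rw [if_neg hm1, if_neg hm2] at hR2
        have := h ((k : ℕ) + 1) m
        omega

lemma mul_swap_left (v : Perm (Fin n)) (i j : Fin n) : (v * swap i j) i = v j := by
  rw [Perm.mul_apply, swap_apply_left]

lemma mul_swap_right (v : Perm (Fin n)) (i j : Fin n) : (v * swap i j) j = v i := by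
  rw [Perm.mul_apply, swap_apply_right]

lemma mul_swap_swap (v : Perm (Fin n)) (i j : Fin n) : (v * swap i j) * swap i j = v := by
  rw [mul_assoc, swap_mul_self, mul_one]

lemma bruhat_asc_step {u : Perm (Fin n)} {k : Fin n} (hk : (k : ℕ) + 1 < n)
    (hu : u k < u (fsucc k hk)) : bruhatLE u (u * swap k (fsucc k hk)) :=
  bruhat_step (ne_of_lt (lt_fsucc k hk)) (by rw [invLength_adj_asc hk hu]; omega)

lemma bruhat_desc_step {u : Perm (Fin n)} {k : Fin n} (hk : (k : ℕ) + 1 < n)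
    (hu : u (fsucc k hk) < u k) : bruhatLE (u * swap k (fsucc k hk)) u := by
  have h1 := invLength_adj_desc hk hu
  have h2 := bruhat_step (u := u * swap k (fsucc k hk)) (ne_of_lt (lt_fsucc k hk))
    (by rw [mul_swap_swap]; omega)
  rw [mul_swap_swap] at h2
  exact h2

lemma bruhatP1 {u w : Perm (Fin n)} {k : Fin n} (hk : (k : ℕ) + 1 < n)
    (hu : u k < u (fsucc k hk)) (hw : w (fsucc k hk) < w k) (h : bruhatLE u w) :
    bruhatLE (u * swap k (fsucc k hk)) w :=
  bruhat_of_rle (rle_lift1 hk hu hw (rle_of_bruhat h))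

lemma bruhatP2 {u w : Perm (Fin n)} {k : Fin n} (hk : (k : ℕ) + 1 < n)
    (hu : u k < u (fsucc k hk)) (hw : w (fsucc k hk) < w k) (h : bruhatLE u w) :
    bruhatLE u (w * swap k (fsucc k hk)) :=
  bruhat_of_rle (rle_lift2 hk hu hw (rle_of_bruhat h))

lemma bruhatP3 {u w : Perm (Fin n)} {k : Fin n} (hk : (k : ℕ) + 1 < n)
    (hu : u (fsucc k hk) < u k) (hw : w (fsucc k hk) < w k) (h : bruhatLE u w) :
    bruhatLE (u * swap k (fsucc k hk)) (w * swap k (fsucc k hk)) := by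
  have h1 : bruhatLE (u * swap k (fsucc k hk)) w := bruhat_trans (bruhat_desc_step hk hu) h
  have h2 : (u * swap k (fsucc k hk)) k < (u * swap k (fsucc k hk)) (fsucc k hk) := by
    rw [mul_swap_left, mul_swap_right]
    exact hu
  exact bruhatP2 hk h2 hw h1

lemma bruhatP4 {u w : Perm (Fin n)} {k : Fin n} (hk : (k : ℕ) + 1 < n)
    (hu : u k < u (fsucc k hk)) (hw : w k < w (fsucc k hk)) (h : bruhatLE u w) :
    bruhatLE (u * swap k (fsucc k hk)) (w * swap k (fsucc k hk)) := by
  have h1 : bruhatLE u (w * swap k (fsucc k hk)) := bruhat_trans h (bruhat_asc_step hk hw)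
  have h2 : (w * swap k (fsucc k hk)) (fsucc k hk) < (w * swap k (fsucc k hk)) k := by
    rw [mul_swap_left, mul_swap_right]
    exact hw
  exact bruhatP1 hk hu h2 h1

lemma exists_descent {w : Perm (Fin n)} (hw : invLength w ≠ 0) :
    ∃ (k : Fin n) (hk : (k : ℕ) + 1 < n), w (fsucc k hk) < w k := by
  by_contra hcon
  push_neg at hcon
  -- w is strictly increasing on adjacent positions
  have hadj : ∀ (k : Fin n) (hk : (k : ℕ) + 1 < n), w k < w (fsucc k hk) := by
    intro k hk
    have h1 := hcon k hk
    have h2 : w k ≠ w (fsucc k hk) := apply_ne_adj hk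
    exact lt_of_le_of_ne h1 h2
  -- hence strictly monotone
  have hmono : ∀ (d : ℕ) (a b : Fin n), (b : ℕ) = (a : ℕ) + d + 1 → w a < w b := by
    intro d
    induction d with
    | zero =>
      intro a b hab
      have hk : (a : ℕ) + 1 < n := by have := b.isLt; omega
      have : fsucc a hk = b := Fin.ext (by rw [coe_fsucc]; omega)
      rw [← this]
      exact hadj a hk
    | succ d ih =>
      intro a b hab
      have hk : (a : ℕ) + 1 < n := by have := b.isLt; omega
      exact lt_trans (hadj a hk) (ih (fsucc a hk) b (by rw [coe_fsucc]; omega))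
  have hmono' : ∀ a b : Fin n, a < b → w a < w b := by
    intro a b hab
    have h1 : (a : ℕ) < (b : ℕ) := hab
    exact hmono ((b : ℕ) - (a : ℕ) - 1) a b (by omega)
  -- pointwise a ≤ w a
  have hle : ∀ a : Fin n, (a : ℕ) ≤ ((w a : ℕ)) := by
    intro a
    have hcard : (Iic a).card ≤ (Iic (w a)).card := by
      apply Finset.card_le_card_of_injOn w
      · intro b hb
        rw [Finset.mem_coe, Finset.mem_Iic] at hb ⊢
        rcases lt_or_eq_of_le hb with h1 | h1
        · exact le_of_lt (hmono' b a h1)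
        · rw [h1]
      · intro x _ y _ hxy
        exact w.injective hxy
    rw [Fin.card_Iic, Fin.card_Iic] at hcard
    omega
  -- sums equal hence equality pointwise
  have hsum : ∑ a : Fin n, ((w a : ℕ)) = ∑ a : Fin n, (a : ℕ) :=
    Equiv.sum_comp w (fun x : Fin n => (x : ℕ))
  have hid : ∀ a : Fin n, ((w a : ℕ)) = (a : ℕ) := by
    by_contra hcon2
    push_neg at hcon2
    obtain ⟨a₀, ha₀⟩ := hcon2
    have : ∑ a : Fin n, (a : ℕ) < ∑ a : Fin n, ((w a : ℕ)) := by
      apply Finset.sum_lt_sum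
      · intro b _; exact hle b
      · exact ⟨a₀, mem_univ a₀, lt_of_le_of_ne (hle a₀) (Ne.symm ha₀)⟩
    omega
  have : w = 1 := Equiv.ext (fun a => Fin.ext (hid a))
  rw [this, invLength_one] at hw
  exact hw rfl

lemma exists_middle {u w : Perm (Fin n)} (h : bruhatLE u w)
    (hl : invLength w = invLength u + 2) :
    ∃ x, bruhatLE u x ∧ bruhatLE x w ∧ invLength x = invLength u + 1 := by
  rcases Relation.ReflTransGen.cases_head h with heq | ⟨b, hub, hbw⟩
  · rw [heq] at hl; omega
  · obtain ⟨⟨i, j, hij, rfl⟩, hlt⟩ := hub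
    have hble := bruhat_length_le hbw
    obtain ⟨K, hK⟩ := odd_invLength_add' (v := u) hij
    have hmid : invLength (u * swap i j) = invLength u + 1 := by omega
    exact ⟨u * swap i j, bruhat_step hij hlt, hbw, hmid⟩

end BruhatAux
end PC
section PD
open Finset
variable {n : ℕ}
namespace BruhatAux

lemma diamond : ∀ (N : ℕ) (u w : Perm (Fin n)), invLength w ≤ N → bruhatLE u w →
    invLength w = invLength u + 2 →
    ∃ v₁ v₂ : Perm (Fin n), v₁ ≠ v₂ ∧
      ∀ v : Perm (Fin n),
        (bruhatLE u v ∧ bruhatLE v w ∧ invLength v = invLength u + 1) ↔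
          (v = v₁ ∨ v = v₂) := by
  intro N
  induction N with
  | zero => intro u w hN _ hl; omega
  | succ N ih =>
    intro u w hN huw hl
    obtain ⟨k, hk, hdesc⟩ := exists_descent (w := w) (by omega)
    have hws_len : invLength (w * swap k (fsucc k hk)) + 1 = invLength w :=
      invLength_adj_desc hk hdesc
    have hws_w : bruhatLE (w * swap k (fsucc k hk)) w := bruhat_desc_step hk hdesc
    have hune : u k ≠ u (fsucc k hk) := apply_ne_adj hk
    have hws_k : (w * swap k (fsucc k hk)) k = w (fsucc k hk) := mul_swap_left w _ _
    have hws_k' : (w * swap k (fsucc k hk)) (fsucc k hk) = w k := mul_swap_right w _ _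
    have hws_asc : (w * swap k (fsucc k hk)) k < (w * swap k (fsucc k hk)) (fsucc k hk) := by
      rw [hws_k, hws_k']; exact hdesc
    have hwss : (w * swap k (fsucc k hk)) * swap k (fsucc k hk) = w := mul_swap_swap w _ _
    by_cases hA : bruhatLE u (w * swap k (fsucc k hk))
    · -- Case A : ws is a middle element
      by_cases hu : u k < u (fsucc k hk)
      · -- Case A1 : middles are ws and u*s
        have hus_len : invLength (u * swap k (fsucc k hk)) = invLength u + 1 :=
          invLength_adj_asc hk hu
        refine ⟨w * swap k (fsucc k hk), u * swap k (fsucc k hk), ?_, ?_⟩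
        · intro heq
          have : w = u := mul_right_cancel heq
          rw [this] at hl
          omega
        · intro v
          constructor
          · rintro ⟨h1, h2, h3⟩
            have hvne : v k ≠ v (fsucc k hk) := apply_ne_adj hk
            by_cases hv : v k < v (fsucc k hk)
            · left
              have hvle : bruhatLE v (w * swap k (fsucc k hk)) := bruhatP2 hk hv hdesc h2
              exact bruhat_eq_of_length_eq hvle (by omega)
            · right
              have hv' : v (fsucc k hk) < v k := lt_of_le_of_ne (not_lt.mp hv) (Ne.symm hvne)
              have hvs_len : invLength (v * swap k (fsucc k hk)) + 1 = invLength v :=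
                invLength_adj_desc hk hv'
              have huvs : bruhatLE u (v * swap k (fsucc k hk)) := bruhatP2 hk hu hv' h1
              have heq : u = v * swap k (fsucc k hk) :=
                bruhat_eq_of_length_eq huvs (by omega)
              rw [heq, mul_swap_swap]
          · rintro (rfl | rfl)
            · exact ⟨hA, hws_w, by omega⟩
            · exact ⟨bruhat_asc_step hk hu, bruhatP1 hk hu hdesc huw, by omega⟩
      · -- Case A2
        have hu' : u (fsucc k hk) < u k := lt_of_le_of_ne (not_lt.mp hu) (Ne.symm hune)
        have hus_len : invLength (u * swap k (fsucc k hk)) + 1 = invLength u :=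
          invLength_adj_desc hk hu'
        have hus_asc : (u * swap k (fsucc k hk)) k < (u * swap k (fsucc k hk)) (fsucc k hk) := by
          rw [mul_swap_left, mul_swap_right]; exact hu'
        have huss : (u * swap k (fsucc k hk)) * swap k (fsucc k hk) = u := mul_swap_swap u _ _
        have hus_ws : bruhatLE (u * swap k (fsucc k hk)) (w * swap k (fsucc k hk)) :=
          bruhatP3 hk hu' hdesc huw
        obtain ⟨y₁, y₂, hy12, hychar⟩ := ih (u * swap k (fsucc k hk))
          (w * swap k (fsucc k hk)) (by omega) hus_ws (by omega)
        have hu_mid : u = y₁ ∨ u = y₂ :=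
          (hychar u).mp ⟨bruhat_desc_step hk hu', hA, by omega⟩
        have main : ∀ y' : Perm (Fin n), y' ≠ u →
            (∀ v : Perm (Fin n), (bruhatLE (u * swap k (fsucc k hk)) v ∧
                bruhatLE v (w * swap k (fsucc k hk)) ∧
                invLength v = invLength (u * swap k (fsucc k hk)) + 1) ↔ (v = u ∨ v = y')) →
            ∃ v₁ v₂ : Perm (Fin n), v₁ ≠ v₂ ∧
              ∀ v : Perm (Fin n),
                (bruhatLE u v ∧ bruhatLE v w ∧ invLength v = invLength u + 1) ↔
                  (v = v₁ ∨ v = v₂) := by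
          intro y' hy'ne char'
          obtain ⟨hy'1, hy'2, hy'3⟩ := (char' y').mpr (Or.inr rfl)
          have hy'val : invLength y' = invLength u := by omega
          -- y' is an ascent at k
          have hy'asc : y' k < y' (fsucc k hk) := by
            by_contra hcon
            have hy'd : y' (fsucc k hk) < y' k :=
              lt_of_le_of_ne (not_lt.mp hcon) (Ne.symm (apply_ne_adj hk))
            have h1 := bruhatP1 hk hus_asc hy'd hy'1
            rw [huss] at h1
            exact hy'ne (bruhat_eq_of_length_eq h1 (by omega)).symm
          have hys_len : invLength (y' * swap k (fsucc k hk)) = invLength u + 1 := by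
            rw [invLength_adj_asc hk hy'asc]; omega
          have hu_ys : bruhatLE u (y' * swap k (fsucc k hk)) := by
            have := bruhatP4 hk hus_asc hy'asc hy'1
            rw [huss] at this
            exact this
          have hys_w : bruhatLE (y' * swap k (fsucc k hk)) w := by
            have := bruhatP4 hk hy'asc hws_asc hy'2
            rw [hwss] at this
            exact this
          refine ⟨w * swap k (fsucc k hk), y' * swap k (fsucc k hk), ?_, ?_⟩
          · intro heq
            have : w = y' := mul_right_cancel heq
            rw [← this] at hy'val
            omega
          · intro v
            constructor
            · rintro ⟨h1, h2, h3⟩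
              have hvne : v k ≠ v (fsucc k hk) := apply_ne_adj hk
              by_cases hv : v k < v (fsucc k hk)
              · left
                have hvle : bruhatLE v (w * swap k (fsucc k hk)) := bruhatP2 hk hv hdesc h2
                exact bruhat_eq_of_length_eq hvle (by omega)
              · right
                have hv' : v (fsucc k hk) < v k := lt_of_le_of_ne (not_lt.mp hv) (Ne.symm hvne)
                have hvs_len : invLength (v * swap k (fsucc k hk)) + 1 = invLength v :=
                  invLength_adj_desc hk hv'
                have hvs_ws : bruhatLE (v * swap k (fsucc k hk)) (w * swap k (fsucc k hk)) :=
                  bruhatP3 hk hv' hdesc h2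
                have hus_vs : bruhatLE (u * swap k (fsucc k hk)) (v * swap k (fsucc k hk)) :=
                  bruhatP3 hk hu' hv' h1
                have hcases := (char' (v * swap k (fsucc k hk))).mp
                  ⟨hus_vs, hvs_ws, by omega⟩
                rcases hcases with heq | heq
                · exfalso
                  have hv_eq : v = u * swap k (fsucc k hk) := by
                    rw [← heq, mul_swap_swap]
                  rw [hv_eq] at h3
                  omega
                · rw [← heq, mul_swap_swap]
            · rintro (rfl | rfl)
              · exact ⟨hA, hws_w, by omega⟩
              · exact ⟨hu_ys, hys_w, by omega⟩
        rcases hu_mid with heq | heq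
        · exact main y₂ (by rw [← heq] at hy12; exact (Ne.symm hy12)) (by
            intro v
            rw [hychar v, heq])
        · exact main y₁ (by rw [← heq] at hy12; exact hy12) (by
            intro v
            rw [hychar v, heq, or_comm])
    · -- Case B
      obtain ⟨x, hx1, hx2, hx3⟩ := exists_middle huw hl
      have hx_desc : x (fsucc k hk) < x k := by
        by_contra hcon
        have hxasc : x k < x (fsucc k hk) :=
          lt_of_le_of_ne (not_lt.mp hcon) (apply_ne_adj hk)
        have := bruhatP2 hk hxasc hdesc hx2
        exact hA (bruhat_trans hx1 this)
      by_cases hu : u k < u (fsucc k hk)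
      · -- impossible
        exfalso
        have h1 := bruhatP2 hk hu hx_desc hx1
        have hxs_len : invLength (x * swap k (fsucc k hk)) + 1 = invLength x :=
          invLength_adj_desc hk hx_desc
        have heq : u = x * swap k (fsucc k hk) := bruhat_eq_of_length_eq h1 (by omega)
        have h2 := bruhatP3 hk hx_desc hdesc hx2
        rw [← heq] at h2
        exact hA h2
      · have hu' : u (fsucc k hk) < u k := lt_of_le_of_ne (not_lt.mp hu) (Ne.symm hune)
        have hus_len : invLength (u * swap k (fsucc k hk)) + 1 = invLength u :=
          invLength_adj_desc hk hu'
        have hus_asc : (u * swap k (fsucc k hk)) k < (u * swap k (fsucc k hk)) (fsucc k hk) := by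
          rw [mul_swap_left, mul_swap_right]; exact hu'
        have huss : (u * swap k (fsucc k hk)) * swap k (fsucc k hk) = u := mul_swap_swap u _ _
        have hus_ws : bruhatLE (u * swap k (fsucc k hk)) (w * swap k (fsucc k hk)) :=
          bruhatP3 hk hu' hdesc huw
        obtain ⟨y₁, y₂, hy12, hychar⟩ := ih (u * swap k (fsucc k hk))
          (w * swap k (fsucc k hk)) (by omega) hus_ws (by omega)
        -- each yᵢ is an ascent at k
        have hyfacts : ∀ y' : Perm (Fin n), (y' = y₁ ∨ y' = y₂) →
            bruhatLE (u * swap k (fsucc k hk)) y' ∧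
            bruhatLE y' (w * swap k (fsucc k hk)) ∧
            invLength y' = invLength u ∧ y' k < y' (fsucc k hk) := by
          intro y' hy'or
          obtain ⟨hy'1, hy'2, hy'3⟩ := (hychar y').mpr hy'or
          refine ⟨hy'1, hy'2, by omega, ?_⟩
          by_contra hcon
          have hy'd : y' (fsucc k hk) < y' k :=
            lt_of_le_of_ne (not_lt.mp hcon) (Ne.symm (apply_ne_adj hk))
          have h1 := bruhatP1 hk hus_asc hy'd hy'1
          rw [huss] at h1
          have heq : u = y' := bruhat_eq_of_length_eq h1 (by omega)
          rw [← heq] at hy'2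
          exact hA hy'2
        obtain ⟨hy11, hy12', hy13, hy1asc⟩ := hyfacts y₁ (Or.inl rfl)
        obtain ⟨hy21, hy22, hy23, hy2asc⟩ := hyfacts y₂ (Or.inr rfl)
        have hmk : ∀ y' : Perm (Fin n), bruhatLE (u * swap k (fsucc k hk)) y' →
            bruhatLE y' (w * swap k (fsucc k hk)) → invLength y' = invLength u →
            y' k < y' (fsucc k hk) →
            bruhatLE u (y' * swap k (fsucc k hk)) ∧
            bruhatLE (y' * swap k (fsucc k hk)) w ∧
            invLength (y' * swap k (fsucc k hk)) = invLength u + 1 := by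
          intro y' h1 h2 h3 hasc
          refine ⟨?_, ?_, ?_⟩
          · have := bruhatP4 hk hus_asc hasc h1
            rw [huss] at this
            exact this
          · have := bruhatP4 hk hasc hws_asc h2
            rw [hwss] at this
            exact this
          · rw [invLength_adj_asc hk hasc]; omega
        obtain ⟨hv11, hv12, hv13⟩ := hmk y₁ hy11 hy12' hy13 hy1asc
        obtain ⟨hv21, hv22, hv23⟩ := hmk y₂ hy21 hy22 hy23 hy2asc
        refine ⟨y₁ * swap k (fsucc k hk), y₂ * swap k (fsucc k hk), ?_, ?_⟩
        · intro heq
          exact hy12 (mul_right_cancel heq)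
        · intro v
          constructor
          · rintro ⟨h1, h2, h3⟩
            have hvne : v k ≠ v (fsucc k hk) := apply_ne_adj hk
            by_cases hv : v k < v (fsucc k hk)
            · exfalso
              have hvle : bruhatLE v (w * swap k (fsucc k hk)) := bruhatP2 hk hv hdesc h2
              exact hA (bruhat_trans h1 hvle)
            · have hv' : v (fsucc k hk) < v k := lt_of_le_of_ne (not_lt.mp hv) (Ne.symm hvne)
              have hvs_len : invLength (v * swap k (fsucc k hk)) + 1 = invLength v :=
                invLength_adj_desc hk hv'
              have hvs_ws : bruhatLE (v * swap k (fsucc k hk)) (w * swap k (fsucc k hk)) :=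
                bruhatP3 hk hv' hdesc h2
              have hus_vs : bruhatLE (u * swap k (fsucc k hk)) (v * swap k (fsucc k hk)) :=
                bruhatP3 hk hu' hv' h1
              have hcases := (hychar (v * swap k (fsucc k hk))).mp
                ⟨hus_vs, hvs_ws, by omega⟩
              rcases hcases with heq | heq
              · left; rw [← heq, mul_swap_swap]
              · right; rw [← heq, mul_swap_swap]
          · rintro (rfl | rfl)
            · exact ⟨hv11, hv12, hv13⟩
            · exact ⟨hv21, hv22, hv23⟩

end BruhatAux
end PD

/-- If `w₁ ≤ w₂` in Bruhat order and `ℓ(w₂) = ℓ(w₁) + 2`, then there are exactly two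
elements `v` with `w₁ ≤ v ≤ w₂` and `ℓ(v) = ℓ(w₁) + 1`. -/
theorem exists_two_middle_elements {n : ℕ} (w₁ w₂ : Perm (Fin n))
    (hle : bruhatLE w₁ w₂) (hlen : invLength w₂ = invLength w₁ + 2) :
    ∃ v₁ v₂ : Perm (Fin n), v₁ ≠ v₂ ∧
      ∀ v : Perm (Fin n),
        (bruhatLE w₁ v ∧ bruhatLE v w₂ ∧ invLength v = invLength w₁ + 1) ↔
          (v = v₁ ∨ v = v₂) := by
  exact BruhatAux.diamond (invLength w₂) w₁ w₂ (le_refl _) hle hlen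
end

section
/- Let c and c' be compositions of n such that c refines c' (i.e. c' is obtained from c by replacing consecutive blocks of parts of c by their sums). Let λ(c) and λ(c') be the partitions of n obtained by sorting c and c' in decreasing order. Then λ(c) ≤ λ(c') in the dominance order, i.e. for every r, the sum of the r largest parts of λ(c) is at most the sum of the r largest parts of λ(c'). -/
open List

/-- auxiliary: if every element of `l` is at most `a`, then sums of takes shift. -/
lemma take_sum_le_cons (a : ℕ) (l : List ℕ) (h : ∀ x ∈ l, x ≤ a) (k : ℕ) :
    (l.take (k + 1)).sum ≤ a + (l.take k).sum := by
  induction l generalizing k with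
  | nil => simp
  | cons b t ih =>
    cases k with
    | zero => simpa using h b (by simp)
    | succ m =>
      simp only [List.take_succ_cons, List.sum_cons]
      have := ih (fun x hx => h x (by simp [hx])) m
      omega

/-- sum of a sublist of a sorted-descending list is at most the sum of its first
`length` entries. -/
lemma sublist_sum_le_take {l s : List ℕ} (hl : l.Pairwise (· ≥ ·)) (hs : s <+ l) :
    s.sum ≤ (l.take s.length).sum := by
  induction hs with
  | slnil => simp
  | @cons l₁ l₂ a h ih =>
    have hl₂ : l₂.Pairwise (· ≥ ·) := (List.pairwise_cons.mp hl).2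
    have ha : ∀ x ∈ l₂, x ≤ a := (List.pairwise_cons.mp hl).1
    have h1 := ih hl₂
    cases hn : l₁.length with
    | zero => simp [List.length_eq_zero_iff.mp hn]
    | succ k =>
      rw [hn] at h1
      have h2 := take_sum_le_cons a l₂ ha k
      simp only [hn, List.take_succ_cons, List.sum_cons]
      omega
  | @cons_cons l₁ l₂ a h ih =>
    have hl₂ : l₂.Pairwise (· ≥ ·) := (List.pairwise_cons.mp hl).2
    simp only [List.length_cons, List.take_succ_cons, List.sum_cons]
    exact Nat.add_le_add_left (ih hl₂) a

lemma take_sum_mono (l : List ℕ) {k r : ℕ} (h : k ≤ r) :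
    (l.take k).sum ≤ (l.take r).sum := by
  have : l.take k <+ l.take r := by
    rw [show l.take k = (l.take r).take k by rw [List.take_take, min_eq_left h]]
    exact List.take_sublist _ _
  exact this.sum_le_sum (by intro x _; exact Nat.zero_le x)

/-- key combinatorial step: a sub-multiset of a flattened list can be covered by
few blocks. -/
lemma cover_by_blocks (L : List (List ℕ)) (t : Multiset ℕ)
    (ht : t ≤ (L.flatten : Multiset ℕ)) :
    ∃ s : List ℕ, s <+ L.map List.sum ∧ s.length ≤ Multiset.card t ∧ t.sum ≤ s.sum := by
  induction L generalizing t with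
  | nil =>
    refine ⟨[], List.Sublist.refl _, ?_, ?_⟩ <;>
      simp_all [Multiset.le_zero.mp (by simpa using ht)]
  | cons b L ih =>
    have hle : t ≤ (b : Multiset ℕ) + (L.flatten : Multiset ℕ) := by
      simpa [List.flatten_cons] using ht
    set t1 : Multiset ℕ := t ∩ (b : Multiset ℕ) with ht1
    set t2 : Multiset ℕ := t - (b : Multiset ℕ) with ht2
    have hdecomp : t2 + t1 = t := Multiset.sub_add_inter t (b : Multiset ℕ)
    have ht2le : t2 ≤ (L.flatten : Multiset ℕ) := by
      rw [ht2, tsub_le_iff_left]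
      exact hle
    obtain ⟨s', hs', hlen', hsum'⟩ := ih t2 ht2le
    have ht1b : t1 ≤ (b : Multiset ℕ) := Multiset.inter_le_right (s := t)
    have ht1sum : t1.sum ≤ b.sum := by
      obtain ⟨u, hu⟩ := Multiset.le_iff_exists_add.mp ht1b
      have : (b : Multiset ℕ).sum = t1.sum + u.sum := by rw [hu, Multiset.sum_add]
      simp only [Multiset.sum_coe] at this
      omega
    by_cases h1 : t1 = 0
    · refine ⟨s', hs'.cons _, ?_, ?_⟩
      · calc s'.length ≤ Multiset.card t2 := hlen'
          _ ≤ Multiset.card t := by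
            rw [← hdecomp]; simp
      · have : t.sum = t2.sum := by rw [← hdecomp, h1]; simp
        rw [this]; exact hsum'
    · refine ⟨b.sum :: s', hs'.cons₂ _, ?_, ?_⟩
      · have hc1 : 1 ≤ Multiset.card t1 := Multiset.card_pos.mpr h1
        have : Multiset.card t = Multiset.card t2 + Multiset.card t1 := by
          rw [← hdecomp]; simp
        simp only [List.length_cons]
        omega
      · have : t.sum = t2.sum + t1.sum := by rw [← hdecomp, Multiset.sum_add]
        simp only [List.sum_cons]
        omega

/-- If a composition `c` of `n` refines a composition `c'` (i.e. `c'` is obtained from `c`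
by merging consecutive blocks of parts), then the partition obtained by sorting `c` in
decreasing order is dominated by the one obtained from `c'`: for every `r`, the sum of the
`r` largest parts of `c` is at most the sum of the `r` largest parts of `c'`. -/
theorem dominance_of_refinement (n : ℕ) (c c' : List ℕ)
    (hc : ∀ x ∈ c, 0 < x) (hc' : ∀ x ∈ c', 0 < x)
    (hsum : c.sum = n) (hsum' : c'.sum = n)
    (href : ∃ L : List (List ℕ), L.flatten = c ∧ L.map List.sum = c') :
    ∀ r : ℕ,
      ((c.insertionSort (· ≥ ·)).take r).sum ≤ ((c'.insertionSort (· ≥ ·)).take r).sum := by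
  obtain ⟨L, hL, hL'⟩ := href
  intro r
  -- the top-r list of c
  set t : List ℕ := (c.insertionSort (· ≥ ·)).take r with htdef
  have htsub : (t : Multiset ℕ) ≤ (c : Multiset ℕ) := by
    have h1 : t <+ c.insertionSort (· ≥ ·) := List.take_sublist _ _
    have h2 : t <+~ c := h1.subperm.trans (List.perm_insertionSort _ c).subperm
    exact h2
  have htcard : Multiset.card (t : Multiset ℕ) ≤ r := by
    simpa [htdef] using (List.length_take_le r (c.insertionSort (· ≥ ·)))
  rw [← hL] at htsub
  obtain ⟨s, hs, hslen, hssum⟩ := cover_by_blocks L (t : Multiset ℕ) htsub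
  rw [hL'] at hs
  -- now bound s.sum by the top-r sum of c'
  have hsubperm : s.insertionSort (· ≥ ·) <+~ c'.insertionSort (· ≥ ·) :=
    ((List.perm_insertionSort _ s).subperm.trans hs.subperm).trans
      (List.perm_insertionSort _ c').symm.subperm
  have hsublist : s.insertionSort (· ≥ ·) <+ c'.insertionSort (· ≥ ·) :=
    List.sublist_of_subperm_of_pairwise hsubperm
      (List.pairwise_insertionSort _ s) (List.pairwise_insertionSort _ c')
  have h1 : (s.insertionSort (· ≥ ·)).sum ≤
      ((c'.insertionSort (· ≥ ·)).take (s.insertionSort (· ≥ ·)).length).sum :=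
    sublist_sum_le_take (List.pairwise_insertionSort _ c') hsublist
  have hlen : (s.insertionSort (· ≥ ·)).length ≤ r := by
    rw [List.length_insertionSort]
    calc s.length ≤ Multiset.card (t : Multiset ℕ) := hslen
      _ ≤ r := htcard
  have h2 := take_sum_mono (c'.insertionSort (· ≥ ·)) hlen
  have h3 : (s.insertionSort (· ≥ ·)).sum = s.sum :=
    (List.perm_insertionSort _ s).sum_eq
  have h4 : (t : Multiset ℕ).sum = t.sum := by simp
  calc t.sum = (t : Multiset ℕ).sum := h4.symm
    _ ≤ s.sum := hssum
    _ = (s.insertionSort (· ≥ ·)).sum := h3.symm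
    _ ≤ _ := h1
    _ ≤ _ := h2
end

section
/- Let c = (n₁, …, n_r) and c' = (m₁, …, m_s) be compositions of n, and let Y_c and Y_{c'} be the corresponding Young subgroups of S_n (the stabilizers of the partitions of {1, …, n} into consecutive blocks of sizes n₁, …, n_r, resp. m₁, …, m_s). Then Y_c and Y_{c'} are conjugate subgroups of S_n if and only if c and c' become equal after sorting in decreasing order (i.e. they have the same multiset of parts). -/
open Equiv

section Aux

theorem Equiv.Perm.apply_inv_self {α : Type*} (f : Perm α) (x : α) : f (f⁻¹ x) = x :=
  f.apply_symm_apply x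

theorem Equiv.Perm.inv_apply_self {α : Type*} (f : Perm α) (x : α) : f⁻¹ (f x) = x :=
  f.symm_apply_apply x

/-- If two `List.ofFn`s are permutations of one another, there is an equivalence of the
index types intertwining the two functions. -/
lemma youngAux_exists_equiv {r s : ℕ} {f : Fin r → ℕ} {g : Fin s → ℕ}
    (h : List.Perm (List.ofFn f) (List.ofFn g)) : ∃ e : Fin r ≃ Fin s, ∀ i, g (e i) = f i := by
  have hrs : r = s := by simpa using h.length_eq
  subst hrs
  have h1 : List.Perm (List.ofFn (f ∘ Tuple.sort f)) (List.ofFn (g ∘ Tuple.sort g)) :=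
    ((Equiv.Perm.ofFn_comp_perm (Tuple.sort f) f).trans h).trans
      (Equiv.Perm.ofFn_comp_perm (Tuple.sort g) g).symm
  have heq : f ∘ Tuple.sort f = g ∘ Tuple.sort g :=
    List.ofFn_injective (List.Perm.eq_of_sortedLE
      ((Tuple.monotone_sort f).sortedLE_ofFn) ((Tuple.monotone_sort g).sortedLE_ofFn) h1)
  refine ⟨(Tuple.sort f).symm.trans (Tuple.sort g), fun i => ?_⟩
  have := congrFun heq ((Tuple.sort f).symm i)
  simpa using this.symm

/-- The fiber of `c.index` over `i` is equivalent to `Fin (c.blocksFun i)`. -/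
def youngFiberEquiv {n : ℕ} (c : Composition n) (i : Fin c.length) :
    {x : Fin n // c.index x = i} ≃ Fin (c.blocksFun i) where
  toFun x := Fin.cast (by rw [x.2]) (c.invEmbedding x.1)
  invFun j := ⟨c.embedding i j, c.index_embedding i j⟩
  left_inv := by
    rintro ⟨x, rfl⟩
    apply Subtype.ext
    apply Fin.ext
    rw [Composition.coe_embedding, Fin.coe_cast, Composition.coe_invEmbedding,
      add_tsub_cancel_of_le (c.sizeUpTo_index_le x)]
  right_inv j := by
    ext
    rw [Fin.coe_cast, c.invEmbedding_comp]

/-- A block-size preserving equivalence of index sets yields equality of block multisets. -/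
lemma youngAux_multiset_eq {n : ℕ} {c c' : Composition n}
    (e : Fin c.length ≃ Fin c'.length)
    (hb : ∀ i, c'.blocksFun (e i) = c.blocksFun i) :
    (c.blocks : Multiset ℕ) = (c'.blocks : Multiset ℕ) := by
  rw [← c.ofFn_blocksFun, ← c'.ofFn_blocksFun, Multiset.coe_eq_coe]
  have hlen : c.length = c'.length := by
    simpa using Fintype.card_congr e
  have h1 : List.ofFn c.blocksFun = List.ofFn fun j : Fin c'.length =>
      c.blocksFun (Fin.cast hlen.symm j) := by
    apply List.ofFn_congr hlen
  rw [h1]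
  have h2 : (fun j : Fin c'.length => c.blocksFun (Fin.cast hlen.symm j)) =
      c'.blocksFun ∘ ((finCongr hlen).symm.trans e) := by
    funext j
    simp [hb]
  rw [h2]
  exact Equiv.Perm.ofFn_comp_perm _ _

end Aux

/-- The Young subgroup of `S_n` associated to a composition `c` of `n`: the subgroup of
permutations preserving each of the consecutive blocks of `c`. -/
def youngSubgroup {n : ℕ} (c : Composition n) : Subgroup (Perm (Fin n)) where
  carrier := {σ | ∀ x : Fin n, c.index (σ x) = c.index x}
  one_mem' := fun _ => rfl
  mul_mem' := fun {a b} ha hb x => (ha (b x)).trans (hb x)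
  inv_mem' := fun {a} ha x =>
    ((congrArg c.index (a.apply_symm_apply x)).symm.trans (ha (a⁻¹ x))).symm

lemma youngSwap_mem {n : ℕ} {c : Composition n} {x y : Fin n}
    (h : c.index x = c.index y) : Equiv.swap x y ∈ youngSubgroup c := by
  intro z
  rcases eq_or_ne z x with rfl | hzx
  · rw [Equiv.swap_apply_left, h]
  rcases eq_or_ne z y with rfl | hzy
  · rw [Equiv.swap_apply_right, h]
  · rw [Equiv.swap_apply_of_ne_of_ne hzx hzy]

/-- Conjugation carrying one Young subgroup to another yields a block-size preserving
equivalence of the index sets. -/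
lemma youngAux_of_conj {n : ℕ} {c c' : Composition n} {g : Perm (Fin n)}
    (hmap : Subgroup.map (MulAut.conj g).toMonoidHom (youngSubgroup c) = youngSubgroup c') :
    ∃ e : Fin c.length ≃ Fin c'.length, ∀ i, c'.blocksFun (e i) = c.blocksFun i := by
  have key : ∀ x y : Fin n, c.index x = c.index y ↔ c'.index (g x) = c'.index (g y) := by
    intro x y
    constructor
    · intro h
      have hτ : (MulAut.conj g).toMonoidHom (Equiv.swap x y) ∈ youngSubgroup c' := by
        rw [← hmap]
        exact Subgroup.mem_map_of_mem _ (youngSwap_mem h)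
      have := hτ (g x)
      simp only [MulEquiv.coe_toMonoidHom, MulAut.conj_apply, Perm.coe_mul,
        Function.comp_apply, Equiv.Perm.inv_apply_self, Equiv.swap_apply_left] at this
      exact this.symm
    · intro h
      have hτ : Equiv.swap (g x) (g y) ∈ youngSubgroup c' := youngSwap_mem h
      rw [← hmap] at hτ
      obtain ⟨σ, hσ, hσ'⟩ := hτ
      have hσx : σ x = y := by
        have := congrArg (fun p : Perm (Fin n) => g⁻¹ (p (g x))) hσ'
        simp only [MulEquiv.coe_toMonoidHom, MulAut.conj_apply, Perm.coe_mul,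
          Function.comp_apply, Equiv.Perm.inv_apply_self, Equiv.swap_apply_left] at this
        exact this
      have := hσ x
      rw [hσx] at this
      exact this.symm
  set pt : ∀ i : Fin c.length, Fin n := fun i => c.embedding i ⟨0, c.one_le_blocksFun i⟩
    with hpt
  have hptidx : ∀ i, c.index (pt i) = i := fun i => c.index_embedding _ _
  set pt' : ∀ j : Fin c'.length, Fin n := fun j => c'.embedding j ⟨0, c'.one_le_blocksFun j⟩
    with hpt'
  have hptidx' : ∀ j, c'.index (pt' j) = j := fun j => c'.index_embedding _ _
  set f : Fin c.length → Fin c'.length := fun i => c'.index (g (pt i)) with hf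
  have hbij : Function.Bijective f := by
    constructor
    · intro i j hij
      rw [← hptidx i, ← hptidx j]
      exact (key _ _).2 hij
    · intro j
      refine ⟨c.index (g⁻¹ (pt' j)), ?_⟩
      have : c'.index (g (pt (c.index (g⁻¹ (pt' j))))) = c'.index (g (g⁻¹ (pt' j))) :=
        (key _ _).1 (by rw [hptidx])
      show c'.index (g (pt (c.index (g⁻¹ (pt' j))))) = j
      rw [this, Equiv.Perm.apply_inv_self, hptidx']
  set e : Fin c.length ≃ Fin c'.length := Equiv.ofBijective f hbij with he
  refine ⟨e, fun i => ?_⟩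
  have hfib : ∀ x' : Fin n, c'.index x' = e i ↔ c.index (g⁻¹ x') = i := by
    intro x'
    have : c.index (g⁻¹ x') = c.index (pt i) ↔ c'.index (g (g⁻¹ x')) = c'.index (g (pt i)) :=
      key _ _
    rw [Equiv.Perm.apply_inv_self, hptidx] at this
    have he' : e i = c'.index (g (pt i)) := rfl
    rw [he']
    exact this.symm
  have card1 : c'.blocksFun (e i) = Fintype.card {x : Fin n // c'.index x = e i} :=
    by rw [Fintype.card_congr (youngFiberEquiv c' (e i)), Fintype.card_fin]
  have card2 : c.blocksFun i = Fintype.card {x : Fin n // c.index x = i} :=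
    by rw [Fintype.card_congr (youngFiberEquiv c i), Fintype.card_fin]
  rw [card1, card2]
  apply Fintype.card_congr
  exact { toFun := fun x => ⟨g⁻¹ x.1, (hfib x.1).1 x.2⟩
          invFun := fun x => ⟨g x.1, (hfib (g x.1)).2
            (by rw [Equiv.Perm.inv_apply_self]; exact x.2)⟩
          left_inv := fun x => Subtype.ext (Equiv.Perm.apply_inv_self g x.1)
          right_inv := fun x => Subtype.ext (Equiv.Perm.inv_apply_self g x.1) }

/-- A block-size preserving equivalence of index sets yields a conjugation between the
Young subgroups. -/
lemma youngAux_conj_of_equiv {n : ℕ} {c c' : Composition n}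
    (e : Fin c.length ≃ Fin c'.length)
    (hb : ∀ i, c'.blocksFun (e i) = c.blocksFun i) :
    ∃ g : Perm (Fin n),
      Subgroup.map (MulAut.conj g).toMonoidHom (youngSubgroup c) = youngSubgroup c' := by
  set F : ∀ i : Fin c.length, Fin (c.blocksFun i) ≃ Fin (c'.blocksFun (e i)) :=
    fun i => finCongr (hb i).symm with hF
  set g : Perm (Fin n) :=
    c.blocksFinEquiv.symm.trans ((Equiv.sigmaCongr e F).trans c'.blocksFinEquiv) with hgdef
  have hg : ∀ x : Fin n, c'.index (g x) = e (c.index x) := by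
    intro x
    show c'.index (c'.blocksFinEquiv (Equiv.sigmaCongr e F (c.blocksFinEquiv.symm x))) = _
    rw [show c.blocksFinEquiv.symm x = ⟨c.index x, c.invEmbedding x⟩ from rfl]
    show c'.index (c'.blocksFinEquiv ⟨e (c.index x), _⟩) = _
    exact c'.index_embedding _ _
  have hg' : ∀ y : Fin n, c.index (g⁻¹ y) = e.symm (c'.index y) := by
    intro y
    have := hg (g⁻¹ y)
    rw [Equiv.Perm.apply_inv_self] at this
    rw [this, Equiv.symm_apply_apply]
  refine ⟨g, ?_⟩
  ext τ
  simp only [Subgroup.mem_map, MulEquiv.coe_toMonoidHom, MulAut.conj_apply]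
  constructor
  · rintro ⟨σ, hσ, rfl⟩
    intro x
    simp only [Perm.coe_mul, Function.comp_apply]
    rw [hg, hσ, ← hg, Equiv.Perm.apply_inv_self]
  · intro hτ
    refine ⟨g⁻¹ * τ * g, fun x => ?_, by group⟩
    simp only [Perm.coe_mul, Function.comp_apply]
    rw [hg', hτ, ← hg', Equiv.Perm.inv_apply_self]

/-- Two Young subgroups of `S_n` are conjugate if and only if the corresponding
compositions have the same multiset of parts (equivalently, are equal after sorting
in decreasing order). -/
theorem youngSubgroup_isConj_iff {n : ℕ} (c c' : Composition n) :
    (∃ g : Perm (Fin n),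
        Subgroup.map (MulAut.conj g).toMonoidHom (youngSubgroup c) = youngSubgroup c') ↔
      (c.blocks : Multiset ℕ) = (c'.blocks : Multiset ℕ) := by
  constructor
  · rintro ⟨g, hmap⟩
    obtain ⟨e, hb⟩ := youngAux_of_conj hmap
    exact youngAux_multiset_eq e hb
  · intro h
    rw [← c.ofFn_blocksFun, ← c'.ofFn_blocksFun, Multiset.coe_eq_coe] at h
    obtain ⟨e, hb⟩ := youngAux_exists_equiv h
    exact youngAux_conj_of_equiv e hb
end

section
/- Let G be a finite group, k an algebraically closed field of characteristic zero, and let V₁ →^{f₁} V₂ →^{f₂} V₃ →^{f₃} V₄ be an exact sequence of finite-dimensional k-linear representations of G (exact at V₂ and V₃). Assume no irreducible representation of G occurs both in V₁ and in V₄. If for every irreducible representation Z occurring in both V₁ and V₂ the induced map f₁^Z on Z-isotypic components is surjective, then for every irreducible representation Z occurring in both V₂ and V₃ the induced map f₂^Z on Z-isotypic components is injective. -/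
section

variable (A : Type) [Ring A]

/-- The irreducible module `Z` occurs in `V` if `V` has a submodule isomorphic to `Z`. -/
def OccursIn (Z V : Type) [AddCommGroup Z] [Module A Z] [AddCommGroup V] [Module A V] :
    Prop :=
  ∃ p : Submodule A V, Nonempty (p ≃ₗ[A] Z)

/-- The `Z`-isotypic component of `V`: the sum of all submodules of `V` isomorphic to `Z`. -/
def isotypic (Z V : Type) [AddCommGroup Z] [Module A Z] [AddCommGroup V] [Module A V] :
    Submodule A V :=
  sSup {p : Submodule A V | Nonempty (p ≃ₗ[A] Z)}

end

section Helpers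

variable {A : Type} [Ring A]

theorem occursIn_of_injective {Z W V : Type} [AddCommGroup Z] [Module A Z]
    [AddCommGroup W] [Module A W] [AddCommGroup V] [Module A V]
    (g : W →ₗ[A] V) (hg : Function.Injective g) (h : OccursIn A Z W) : OccursIn A Z V := by
  obtain ⟨p, ⟨e⟩⟩ := h
  exact ⟨p.map g, ⟨(Submodule.equivMapOfInjective g hg p).symm.trans e⟩⟩

theorem occursIn_congr {Z W V : Type} [AddCommGroup Z] [Module A Z]
    [AddCommGroup W] [Module A W] [AddCommGroup V] [Module A V]
    (e : W ≃ₗ[A] V) (h : OccursIn A Z W) : OccursIn A Z V :=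
  occursIn_of_injective e.toLinearMap e.injective h

theorem occursIn_of_le {Z V : Type} [AddCommGroup Z] [Module A Z]
    [AddCommGroup V] [Module A V] {S p : Submodule A V} (hle : S ≤ p)
    (e : S ≃ₗ[A] Z) : OccursIn A Z p :=
  ⟨S.comap p.subtype, ⟨(Submodule.comapSubtypeEquivOfLe hle).trans e⟩⟩

theorem occursIn_of_surjective {Z W V : Type} [AddCommGroup Z] [Module A Z]
    [AddCommGroup W] [Module A W] [AddCommGroup V] [Module A V]
    [IsSemisimpleModule A W]
    (g : W →ₗ[A] V) (hg : Function.Surjective g) (h : OccursIn A Z V) : OccursIn A Z W := by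
  obtain ⟨C, hC⟩ := exists_isCompl (LinearMap.ker g)
  have e : (↥C) ≃ₗ[A] V :=
    (Submodule.quotientEquivOfIsCompl _ _ hC).symm.trans (g.quotKerEquivOfSurjective hg)
  exact occursIn_of_injective C.subtype Subtype.coe_injective (occursIn_congr e.symm h)

theorem equiv_of_simple_le_isotypic {Z V : Type} [AddCommGroup Z] [Module A Z]
    [AddCommGroup V] [Module A V] [IsSemisimpleModule A V]
    (hZ : IsSimpleModule A Z) {S : Submodule A V} (hS : IsSimpleModule A S)
    (hle : S ≤ isotypic A Z V) : Nonempty (S ≃ₗ[A] Z) := by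
  obtain ⟨C, hC⟩ := exists_isCompl S
  set π := Submodule.linearProjOfIsCompl S C hC with hπ
  by_cases hall : ∀ p ∈ {p : Submodule A V | Nonempty (p ≃ₗ[A] Z)}, p ≤ LinearMap.ker π
  · exfalso
    have hSk : S ≤ LinearMap.ker π := le_trans hle (sSup_le hall)
    haveI := hS
    haveI : Nontrivial S := IsSimpleModule.nontrivial A S
    obtain ⟨x, hx0⟩ := exists_ne (0 : S)
    have h1 : π (x : V) = x := Submodule.linearProjOfIsCompl_apply_left hC x
    have h2 : π (x : V) = 0 := hSk x.2
    exact hx0 (by rw [← h1, h2])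
  · push_neg at hall
    obtain ⟨p, ⟨eZ⟩, hp⟩ := hall
    haveI := hZ
    haveI : IsSimpleModule A p := IsSimpleModule.congr eZ
    haveI := hS
    have hne : π.comp p.subtype ≠ 0 := by
      intro h0
      exact hp fun x hx => by
        simpa using DFunLike.congr_fun h0 (⟨x, hx⟩ : p)
    have hbij := (π.comp p.subtype).bijective_or_eq_zero.resolve_right hne
    exact ⟨(LinearEquiv.ofBijective _ hbij).symm.trans eZ⟩

end Helpers

/-- Let `V₁ → V₂ → V₃ → V₄` be an exact sequence of finite-dimensional representations of a
finite group `G` over an algebraically closed field `k` of characteristic zero (viewed as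
modules over the group algebra `k[G]`).  Assume no irreducible representation occurs in both
`V₁` and `V₄`.  If for every irreducible `Z` occurring in both `V₁` and `V₂` the induced map
`f₁^Z` on `Z`-isotypic components is surjective (i.e. the `Z`-isotypic component of `V₂` is
contained in the image of that of `V₁`), then for every irreducible `Z` occurring in both
`V₂` and `V₃` the induced map `f₂^Z` is injective (i.e. `ker f₂` meets the `Z`-isotypic
component of `V₂` trivially). -/
theorem si_injective_of_si_surjective
    (k : Type) [Field k] [IsAlgClosed k] [CharZero k]
    (G : Type) [Group G] [Finite G]
    (V₁ V₂ V₃ V₄ : Type)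
    [AddCommGroup V₁] [AddCommGroup V₂] [AddCommGroup V₃] [AddCommGroup V₄]
    [Module (MonoidAlgebra k G) V₁] [Module (MonoidAlgebra k G) V₂]
    [Module (MonoidAlgebra k G) V₃] [Module (MonoidAlgebra k G) V₄]
    [Module.Finite (MonoidAlgebra k G) V₁] [Module.Finite (MonoidAlgebra k G) V₂]
    [Module.Finite (MonoidAlgebra k G) V₃] [Module.Finite (MonoidAlgebra k G) V₄]
    (f₁ : V₁ →ₗ[MonoidAlgebra k G] V₂)
    (f₂ : V₂ →ₗ[MonoidAlgebra k G] V₃)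
    (f₃ : V₃ →ₗ[MonoidAlgebra k G] V₄)
    (hex₂ : LinearMap.range f₁ = LinearMap.ker f₂)
    (hex₃ : LinearMap.range f₂ = LinearMap.ker f₃)
    (hdisj : ¬ ∃ (Z : Type) (_ : AddCommGroup Z) (_ : Module (MonoidAlgebra k G) Z),
        IsSimpleModule (MonoidAlgebra k G) Z ∧
        OccursIn (MonoidAlgebra k G) Z V₁ ∧ OccursIn (MonoidAlgebra k G) Z V₄)
    (hsurj : ∀ (Z : Type) [AddCommGroup Z] [Module (MonoidAlgebra k G) Z],
        IsSimpleModule (MonoidAlgebra k G) Z →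
        OccursIn (MonoidAlgebra k G) Z V₁ → OccursIn (MonoidAlgebra k G) Z V₂ →
        isotypic (MonoidAlgebra k G) Z V₂ ≤
          Submodule.map f₁ (isotypic (MonoidAlgebra k G) Z V₁)) :
    ∀ (Z : Type) [AddCommGroup Z] [Module (MonoidAlgebra k G) Z],
        IsSimpleModule (MonoidAlgebra k G) Z →
        OccursIn (MonoidAlgebra k G) Z V₂ → OccursIn (MonoidAlgebra k G) Z V₃ →
        LinearMap.ker f₂ ⊓ isotypic (MonoidAlgebra k G) Z V₂ = ⊥ := by

  intro Z _ _ hZ hZ2 hZ3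
  classical
  letI : Fintype G := Fintype.ofFinite G
  haveI : NeZero ((Fintype.card G : k)) := ⟨Nat.cast_ne_zero.mpr Fintype.card_ne_zero⟩
  by_contra hne
  obtain ⟨S, hSle, hSsimple⟩ :=
    (IsSemisimpleModule.eq_bot_or_exists_simple_le
      (LinearMap.ker f₂ ⊓ isotypic (MonoidAlgebra k G) Z V₂)).resolve_left hne
  obtain ⟨eS⟩ := equiv_of_simple_le_isotypic hZ hSsimple (hSle.trans inf_le_right)
  have hr : S ≤ LinearMap.range f₁ := by rw [hex₂]; exact hSle.trans inf_le_left
  have hZ1 : OccursIn (MonoidAlgebra k G) Z V₁ :=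
    occursIn_of_surjective f₁.rangeRestrict f₁.surjective_rangeRestrict (occursIn_of_le hr eS)
  have hIle : isotypic (MonoidAlgebra k G) Z V₂ ≤ LinearMap.ker f₂ := by
    refine le_trans (hsurj Z hZ hZ1 hZ2) ?_
    rw [← hex₂]
    exact LinearMap.map_le_range
  obtain ⟨p, ⟨ep⟩⟩ := hZ3
  haveI := hZ
  haveI hps : IsSimpleModule (MonoidAlgebra k G) p := IsSimpleModule.congr ep
  have hpker : ¬ p ≤ LinearMap.ker f₃ := by
    intro hb
    rw [← hex₃] at hb
    obtain ⟨C, hC⟩ := exists_isCompl (LinearMap.ker f₂)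
    have e : (↥C) ≃ₗ[MonoidAlgebra k G] ↥(LinearMap.range f₂) :=
      (Submodule.quotientEquivOfIsCompl _ _ hC).symm.trans f₂.quotKerEquivRange
    obtain ⟨q, ⟨eq'⟩⟩ := occursIn_congr e.symm (occursIn_of_le hb ep)
    have eQ : (↥(q.map C.subtype)) ≃ₗ[MonoidAlgebra k G] Z :=
      (Submodule.equivMapOfInjective C.subtype Subtype.coe_injective q).symm.trans eq'
    have hmem : q.map C.subtype ∈
        {p : Submodule (MonoidAlgebra k G) V₂ | Nonempty (p ≃ₗ[MonoidAlgebra k G] Z)} := ⟨eQ⟩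
    have hQ1 : q.map C.subtype ≤ LinearMap.ker f₂ := le_trans (le_sSup hmem) hIle
    have hQ2 : q.map C.subtype ≤ C := Submodule.map_subtype_le C q
    have hQbot : q.map C.subtype = ⊥ := by
      have hdb := disjoint_iff.mp hC.disjoint
      exact le_bot_iff.mp (by rw [← hdb]; exact le_inf hQ1 hQ2)
    haveI : Nontrivial Z := IsSimpleModule.nontrivial (MonoidAlgebra k G) Z
    haveI : Nontrivial (↥(q.map C.subtype)) := eQ.toEquiv.nontrivial
    exact (Submodule.nontrivial_iff_ne_bot.mp this) hQbot
  have hdisj3 : p ⊓ LinearMap.ker f₃ = ⊥ := by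
    have hatom : IsAtom p := isSimpleModule_iff_isAtom.mp hps
    rcases (inf_le_left : p ⊓ LinearMap.ker f₃ ≤ p).lt_or_eq with hlt | heq
    · exact hatom.2 _ hlt
    · exact absurd (heq ▸ inf_le_right) hpker
  have hinj : Function.Injective (f₃.comp p.subtype) := by
    rw [← LinearMap.ker_eq_bot, LinearMap.ker_comp, Submodule.eq_bot_iff]
    intro x hx
    have hmem : (x : V₃) ∈ p ⊓ LinearMap.ker f₃ := ⟨x.2, by simpa using hx⟩
    rw [hdisj3] at hmem
    exact Subtype.ext (by simpa using hmem)
  have hZ4 : OccursIn (MonoidAlgebra k G) Z V₄ :=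
    ⟨LinearMap.range (f₃.comp p.subtype),
     ⟨(LinearEquiv.ofInjective _ hinj).symm.trans ep⟩⟩
  exact hdisj ⟨Z, inferInstance, inferInstance, hZ, hZ1, hZ4⟩
end
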